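/- arXiv:1004.4777 — 6 statements merged into one kernel-verified Lean document; each statement's English description precedes it below -/
import Mathlib

section
/- A class of graphs has bounded n-depth tree-width for some n if and only if it excludes some path as a subgraph. -/
open scoped Classical

/-- A tree domain: a (finite) prefix-closed set of finite sequences. -/
def PrefixClosed (T : Finset (List ℕ)) : Prop :=
  ∀ x ∈ T, ∀ y : List ℕ, y <+: x → y ∈ T

/-- A set of nodes of a tree domain is connected in the tree iff it has a root `r`
below all its members such that all nodes between `r` and a member are members. -/
def ConnectedIn (S : Set (List ℕ)) : Prop :=
  ∃ r ∈ S, ∀ v ∈ S, r <+: v ∧ ∀ u : List ℕ, r <+: u → u <+: v → u ∈ S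

/-- A tree decomposition of a graph `G`. -/
structure IsTreeDecomp {V : Type*} (G : SimpleGraph V)
    (T : Finset (List ℕ)) (bag : List ℕ → Finset V) : Prop where
  prefix_closed : PrefixClosed T
  vertex_conn : ∀ a : V, ConnectedIn {v | v ∈ T ∧ a ∈ bag v}
  edge_cover : ∀ a b : V, G.Adj a b → ∃ v ∈ T, a ∈ bag v ∧ b ∈ bag v

/-- `G` contains a simple path with `l` edges (equivalently, the path of length `l`
is a subgraph of `G`). -/
def HasPathOfLength {V : Type*} (G : SimpleGraph V) (l : ℕ) : Prop :=
  ∃ (u v : V) (p : G.Walk u v), p.IsPath ∧ p.length = l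

lemma exists_cons_prefix {u x : List ℕ} (h : u <+: x) (hne : u ≠ x) :
    ∃ c, u ++ [c] <+: x := by
  obtain ⟨t, rfl⟩ := h
  cases t with
  | nil => simp at hne
  | cons c t => exact ⟨c, ⟨t, by simp⟩⟩

lemma cons_prefix_unique {u x : List ℕ} {c c' : ℕ} (h : u ++ [c] <+: x)
    (h' : u ++ [c'] <+: x) : c = c' := by
  rcases List.prefix_or_prefix_of_prefix h h' with h2 | h2
  · simpa using List.IsPrefix.eq_of_length h2 (by simp)
  · simpa using (List.IsPrefix.eq_of_length h2 (by simp)).symm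

lemma common_child (t : ℕ → List ℕ) (u : List ℕ) (lo hi : ℕ) (hle : lo ≤ hi)
    (hcomp : ∀ i, lo ≤ i → i < hi → t i <+: t (i+1) ∨ t (i+1) <+: t i)
    (hstrict : ∀ i, lo ≤ i → i ≤ hi → u <+: t i ∧ t i ≠ u) :
    ∃ c, ∀ i, lo ≤ i → i ≤ hi → u ++ [c] <+: t i := by
  obtain ⟨c, hc⟩ := exists_cons_prefix (hstrict lo le_rfl hle).1
    (Ne.symm (hstrict lo le_rfl hle).2)
  refine ⟨c, ?_⟩
  have key : ∀ d, lo + d ≤ hi → u ++ [c] <+: t (lo + d) := by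
    intro d
    induction d with
    | zero => intro _; simpa using hc
    | succ d ih =>
      intro h
      have hprev := ih (by omega)
      rcases hcomp (lo + d) (by omega) (by omega) with h2 | h2
      · exact hprev.trans h2
      · obtain ⟨c', hc'⟩ := exists_cons_prefix (hstrict (lo + d + 1) (by omega) (by omega)).1
          (Ne.symm (hstrict (lo + d + 1) (by omega) (by omega)).2)
        have heq : c' = c := cons_prefix_unique (hc'.trans h2) hprev
        subst heq
        exact hc'
  intro i hlo hhi
  have := key (i - lo) (by omega)
  rwa [Nat.add_sub_cancel' hlo] at this

lemma chain_bound (k : ℕ) :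
    ∀ (s : ℕ) (u : List ℕ) (t : ℕ → List ℕ) (lo hi : ℕ),
      (∀ i, lo ≤ i → i < hi → t i <+: t (i+1) ∨ t (i+1) <+: t i) →
      (∀ i, lo ≤ i → i ≤ hi → u <+: t i ∧ (t i).length < u.length + s) →
      (∀ w : List ℕ, (((Finset.Icc lo hi)).filter (fun i => t i = w)).card ≤ k + 1) →
      hi + 1 - lo ≤ (k + 2) ^ s - 1 := by
  intro s
  induction s with
  | zero =>
    intro u t lo hi _ hpre _
    rcases le_or_gt lo hi with h | h
    · have h1 := (hpre lo le_rfl h).1.length_le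
      have h2 := (hpre lo le_rfl h).2
      omega
    · omega
  | succ s ih =>
    intro u t lo hi hcomp hpre hfib
    -- inner strong induction
    have inner : ∀ N lo hi,
        hi + 1 - lo ≤ N →
        (∀ i, lo ≤ i → i < hi → t i <+: t (i+1) ∨ t (i+1) <+: t i) →
        (∀ i, lo ≤ i → i ≤ hi → u <+: t i ∧ (t i).length < u.length + (s+1)) →
        (∀ w : List ℕ, (((Finset.Icc lo hi)).filter (fun i => t i = w)).card ≤ k + 1) →
        hi + 1 - lo ≤ ((Finset.Icc lo hi).filter (fun i => t i = u)).card
          + (((Finset.Icc lo hi).filter (fun i => t i = u)).card + 1) * ((k + 2) ^ s - 1) := by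
      intro N
      induction N with
      | zero => intro lo hi h _ _ _; omega
      | succ N ihN =>
        intro lo hi hN hcomp hpre hfib
        rcases lt_or_ge hi lo with hlh | hlh
        · omega
        set F := (Finset.Icc lo hi).filter (fun i => t i = u) with hF
        by_cases hFne : F.Nonempty
        · obtain ⟨m, hmF, hmin⟩ : ∃ m ∈ F, ∀ i ∈ F, m ≤ i :=
            ⟨F.min' hFne, F.min'_mem hFne, fun i hi => F.min'_le i hi⟩
          have hmIcc : lo ≤ m ∧ m ≤ hi := Finset.mem_Icc.mp (Finset.mem_filter.mp hmF).1
          have htm : t m = u := (Finset.mem_filter.mp hmF).2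
          -- gap before m
          have gap : m - lo ≤ (k + 2) ^ s - 1 := by
            rcases eq_or_lt_of_le hmIcc.1 with heq | hlt
            · omega
            · have hstrict : ∀ i, lo ≤ i → i ≤ m - 1 → u <+: t i ∧ t i ≠ u := by
                intro i h1 h2
                refine ⟨(hpre i h1 (by omega)).1, fun hti => ?_⟩
                have : i ∈ F := Finset.mem_filter.mpr
                  ⟨Finset.mem_Icc.mpr ⟨h1, by omega⟩, hti⟩
                have := hmin i this
                omega
              obtain ⟨c, hc⟩ := common_child t u lo (m-1) (by omega)
                (fun i h1 h2 => hcomp i h1 (by omega)) hstrict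
              have := ih (u ++ [c]) t lo (m-1)
                (fun i h1 h2 => hcomp i h1 (by omega))
                (fun i h1 h2 => ⟨hc i h1 h2, by
                  have := (hpre i h1 (by omega)).2
                  simp only [List.length_append, List.length_cons, List.length_nil]
                  omega⟩)
                (fun w => le_trans (Finset.card_le_card (Finset.filter_subset_filter _
                  (Finset.Icc_subset_Icc_right (by omega)))) (hfib w))
              omega
          -- rest after m
          have hsub : (Finset.Icc (m+1) hi).filter (fun i => t i = u) = F.erase m := by
            ext i
            simp only [Finset.mem_filter, Finset.mem_Icc, Finset.mem_erase, hF]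
            constructor
            · rintro ⟨⟨h1, h2⟩, h3⟩
              exact ⟨by omega, ⟨⟨by omega, h2⟩, h3⟩⟩
            · rintro ⟨h1, ⟨⟨h2, h3⟩, h4⟩⟩
              have := hmin i (Finset.mem_filter.mpr ⟨Finset.mem_Icc.mpr ⟨h2, h3⟩, h4⟩)
              exact ⟨⟨by omega, h3⟩, h4⟩
          have hrest := ihN (m+1) hi (by omega)
            (fun i h1 h2 => hcomp i (by omega) h2)
            (fun i h1 h2 => hpre i (by omega) h2)
            (fun w => le_trans (Finset.card_le_card (Finset.filter_subset_filter _
              (Finset.Icc_subset_Icc_left (by omega)))) (hfib w))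
          rw [hsub, Finset.card_erase_of_mem hmF] at hrest
          have hcard : 1 ≤ F.card := Finset.card_pos.mpr hFne
          rw [Nat.sub_add_cancel hcard] at hrest
          have hmulexp : (F.card + 1) * ((k + 2) ^ s - 1)
              = F.card * ((k + 2) ^ s - 1) + ((k + 2) ^ s - 1) := by ring
          omega
        · -- no u-index
          have hFe : ∀ i, lo ≤ i → i ≤ hi → t i ≠ u := by
            intro i h1 h2 hti
            exact hFne ⟨i, Finset.mem_filter.mpr ⟨Finset.mem_Icc.mpr ⟨h1, h2⟩, hti⟩⟩
          obtain ⟨c, hc⟩ := common_child t u lo hi hlh hcomp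
            (fun i h1 h2 => ⟨(hpre i h1 h2).1, hFe i h1 h2⟩)
          have := ih (u ++ [c]) t lo hi hcomp
            (fun i h1 h2 => ⟨hc i h1 h2, by
              have := (hpre i h1 h2).2
              simp only [List.length_append, List.length_cons, List.length_nil]
              omega⟩) hfib
          have hms : (k + 2) ^ s - 1 ≤ (F.card + 1) * ((k + 2) ^ s - 1) :=
            Nat.le_mul_of_pos_left _ (by omega)
          omega
    have hmain := inner (hi + 1 - lo) lo hi le_rfl hcomp hpre hfib
    have hcard : ((Finset.Icc lo hi).filter (fun i => t i = u)).card ≤ k + 1 := hfib u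
    have hP : 1 ≤ (k + 2) ^ s := Nat.one_le_pow _ _ (by omega)
    have e1 : (((Finset.Icc lo hi).filter (fun i => t i = u)).card + 1) * ((k + 2) ^ s - 1)
        ≤ (k + 2) * ((k + 2) ^ s - 1) := Nat.mul_le_mul_right _ (by omega)
    have e2 : (k + 2) * ((k + 2) ^ s - 1) + (k + 2) = (k + 2) * (k + 2) ^ s := by
      rw [← Nat.mul_succ]
      congr 1
      omega
    have e3 : (k + 2) ^ (s + 1) = (k + 2) * (k + 2) ^ s := by ring
    omega

lemma exists_walk_support {V : Type*} {G : SimpleGraph V} :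
    ∀ (L : List V) (a : V), List.Chain G.Adj a L →
      ∃ (v : V) (p : G.Walk a v), p.support = a :: L := by
  intro L
  induction L with
  | nil => exact fun a _ => ⟨a, SimpleGraph.Walk.nil, by simp⟩
  | cons b L ih =>
    intro a hch
    replace hch := List.isChain_cons_cons.mp hch
    obtain ⟨v, p, hp⟩ := ih b hch.2
    exact ⟨v, SimpleGraph.Walk.cons hch.1 p, by simp [hp]⟩

lemma length_le_of_no_path {V : Type*} {G : SimpleGraph V} {l : ℕ}
    (hG : ¬ HasPathOfLength G l) (L : List V) (hch : L.Chain' G.Adj) (hnd : L.Nodup) :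
    L.length ≤ l := by
  by_contra h
  push_neg at h
  have hlen : (L.take (l + 1)).length = l + 1 := by simp; omega
  have hch' : (L.take (l + 1)).Chain' G.Adj := hch.take _
  have hnd' : (L.take (l + 1)).Nodup := hnd.sublist (List.take_sublist _ _)
  rcases hT : L.take (l + 1) with _ | ⟨a, L''⟩
  · rw [hT] at hlen; simp at hlen
  rw [hT] at hlen hch' hnd'
  have hchain : List.Chain G.Adj a L'' := hch'
  obtain ⟨v, p, hp⟩ := exists_walk_support L'' a hchain
  refine hG ⟨a, v, p, ?_, ?_⟩
  · rw [SimpleGraph.Walk.isPath_def, hp]; exact hnd'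
  · have := SimpleGraph.Walk.length_support p
    rw [hp] at this
    simp at this hlen
    omega

lemma getVert_inj {V : Type*} {G : SimpleGraph V} {u v : V} {p : G.Walk u v}
    (hp : p.IsPath) : ∀ i j, i ≤ p.length → j ≤ p.length →
      p.getVert i = p.getVert j → i = j := by
  induction p with
  | nil => intro i j hi hj _; simp at hi hj; omega
  | @cons a b c h q ih =>
    rw [SimpleGraph.Walk.cons_isPath_iff] at hp
    intro i j hi hj heq
    match i, j with
    | 0, 0 => rfl
    | 0, j + 1 =>
      exfalso
      apply hp.2
      rw [SimpleGraph.Walk.mem_support_iff_exists_getVert]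
      refine ⟨j, ?_, ?_⟩
      · simpa [SimpleGraph.Walk.getVert_cons_succ, SimpleGraph.Walk.getVert_zero] using heq.symm
      · simpa using hj
    | i + 1, 0 =>
      exfalso
      apply hp.2
      rw [SimpleGraph.Walk.mem_support_iff_exists_getVert]
      refine ⟨i, ?_, ?_⟩
      · simpa [SimpleGraph.Walk.getVert_cons_succ, SimpleGraph.Walk.getVert_zero] using heq
      · simpa using hi
    | i + 1, j + 1 =>
      have := ih hp.1 i j (by simpa using hi) (by simpa using hj)
        (by simpa [SimpleGraph.Walk.getVert_cons_succ] using heq)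
      omega

lemma no_path_of_decomp {V : Type*} {G : SimpleGraph V} {n k : ℕ}
    {T : Finset (List ℕ)} {bag : List ℕ → Finset V}
    (htd : IsTreeDecomp G T bag) (hdepth : ∀ x ∈ T, x.length < n)
    (hwidth : ∀ x ∈ T, (bag x).card ≤ k + 1) :
    ¬ HasPathOfLength G ((k + 2) ^ n) := by
  rintro ⟨u, v, p, hp, hlen⟩
  have hconn := htd.vertex_conn
  choose r hrS hrmin using hconn
  simp only [Set.mem_setOf_eq] at hrS
  set t : ℕ → List ℕ := fun i => r (p.getVert i) with ht
  have hbound := chain_bound k n [] t 0 p.length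
    (by
      intro i _ hi
      have hadj := p.adj_getVert_succ hi
      obtain ⟨w, hwT, hw1, hw2⟩ := htd.edge_cover _ _ hadj
      have h1 : t i <+: w := ((hrmin (p.getVert i)) w ⟨hwT, hw1⟩).1
      have h2 : t (i+1) <+: w := ((hrmin (p.getVert (i+1))) w ⟨hwT, hw2⟩).1
      exact List.prefix_or_prefix_of_prefix h1 h2)
    (by
      intro i _ _
      refine ⟨List.nil_prefix, ?_⟩
      simpa using hdepth _ (hrS (p.getVert i)).1)
    (by
      intro w
      rcases Finset.eq_empty_or_nonempty
        ((Finset.Icc 0 p.length).filter (fun i => t i = w)) with he | hne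
      · rw [he]; simp
      · obtain ⟨i₀, hi₀⟩ := hne
        have hwT : w ∈ T := by
          have := (Finset.mem_filter.mp hi₀).2
          rw [← this]
          exact (hrS (p.getVert i₀)).1
        refine le_trans (Finset.card_le_card_of_injOn (fun i => p.getVert i) ?_ ?_)
          (hwidth w hwT)
        · intro i hi
          have hti := (Finset.mem_filter.mp hi).2
          have := (hrS (p.getVert i)).2
          rwa [show r (p.getVert i) = w from hti] at this
        · intro i hi j hj hij
          have hi' := Finset.mem_Icc.mp (Finset.mem_filter.mp hi).1
          have hj' := Finset.mem_Icc.mp (Finset.mem_filter.mp hj).1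
          exact getVert_inj hp i j hi'.2 hj'.2 hij)
  have hP : 1 ≤ (k + 2) ^ n := Nat.one_le_pow _ _ (by omega)
  omega

noncomputable def nbrs {N : ℕ} (G : SimpleGraph (Fin N)) (v : Fin N) : List (Fin N) :=
  (Finset.univ.filter (fun w => G.Adj v w)).toList

lemma mem_nbrs {N : ℕ} {G : SimpleGraph (Fin N)} {v w : Fin N} :
    w ∈ nbrs G v ↔ G.Adj v w := by
  simp [nbrs]

noncomputable def dfsAux {N : ℕ} (G : SimpleGraph (Fin N)) :
    List (Fin N) → List (Fin N) → Finset (Fin N) → Finset (Fin N) × Finset (List (Fin N))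
  | [], _, vis => (vis, ∅)
  | w :: rest, st, vis =>
    if w ∈ vis then dfsAux G rest st vis
    else
      let r := dfsAux G (nbrs G w) (w :: st) (insert w vis)
      let r2 := dfsAux G rest st (insert w vis ∪ r.1)
      (r2.1, insert (w :: st) (r.2 ∪ r2.2))
termination_by ws _ vis => (((visᶜ : Finset (Fin N))).card, ws.length)
decreasing_by
  · exact Prod.Lex.right _ (by simp)
  · apply Prod.Lex.left
    apply Finset.card_lt_card
    rw [Finset.ssubset_iff_of_subset (Finset.compl_subset_compl.mpr (Finset.subset_insert w vis))]
    exact ⟨w, by simp [*], by simp⟩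
  · apply Prod.Lex.left
    apply Finset.card_lt_card
    rw [Finset.ssubset_iff_of_subset (Finset.compl_subset_compl.mpr
      ((Finset.subset_insert w vis).trans Finset.subset_union_left))]
    exact ⟨w, by simp [*], by simp⟩

structure DfsSpec {N : ℕ} (G : SimpleGraph (Fin N)) (ws st : List (Fin N)) (vis : Finset (Fin N))
    (out : Finset (Fin N) × Finset (List (Fin N))) : Prop where
  mono : vis ⊆ out.1
  wsVis : ∀ w ∈ ws, w ∈ out.1
  suffix : ∀ s ∈ out.2, st <:+ s ∧ st ≠ s
  chain : ∀ s ∈ out.2, s.Chain' G.Adj ∧ s.Nodup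
  closed : ∀ s ∈ out.2, ∀ s' : List (Fin N), s' <:+ s → s' ∈ out.2 ∨ s' <:+ st
  fresh : ∀ s ∈ out.2, ∀ x ∈ s, x ∈ st ∨ x ∉ vis
  elemVis : ∀ s ∈ out.2, ∀ x ∈ s, x ∈ out.1
  disc : ∀ x ∈ out.1, x ∉ vis →
    ∃ s ∈ out.2, s.head? = some x ∧ ∀ s' ∈ out.2, x ∈ s' → s <:+ s'
  finished : ∀ x ∈ out.1, x ∉ vis → ∀ y, G.Adj x y → y ∈ out.1
  edge : ∀ x ∈ out.1, x ∉ vis → ∀ y, G.Adj x y →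
    y ∈ vis ∨ ∃ s ∈ out.2, x ∈ s ∧ y ∈ s

lemma head?_mem {α : Type*} {s : List α} {x : α} (h : s.head? = some x) : x ∈ s := by
  cases s with
  | nil => simp at h
  | cons a t => simp at h; simp [h]

lemma dfsAux_spec {N : ℕ} (G : SimpleGraph (Fin N)) :
    ∀ (ws st : List (Fin N)) (vis : Finset (Fin N)),
      (∀ x ∈ st, x ∈ vis) → st.Chain' G.Adj → st.Nodup →
      (∀ w ∈ ws, ∀ y ∈ st.head?, G.Adj w y) →
      DfsSpec G ws st vis (dfsAux G ws st vis) := by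
  intro ws st vis
  induction ws, st, vis using dfsAux.induct G with
  | case1 st vis =>
    intro hsub hch hnd hadj
    rw [dfsAux]
    exact {
      mono := Finset.Subset.refl _
      wsVis := by simp
      suffix := by simp
      chain := by simp
      closed := by simp
      fresh := by simp
      elemVis := by simp
      disc := fun x hx hxv => absurd hx hxv
      finished := fun x hx hxv => absurd hx hxv
      edge := fun x hx hxv => absurd hx hxv }
  | case2 w rest st vis hw ih =>
    intro hsub hch hnd hadj
    rw [dfsAux, if_pos hw]
    have S := ih hsub hch hnd (fun u hu => hadj u (List.mem_cons_of_mem w hu))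
    exact {
      mono := S.mono
      wsVis := by
        intro u hu
        rcases List.mem_cons.mp hu with rfl | hu
        · exact S.mono hw
        · exact S.wsVis u hu
      suffix := S.suffix
      chain := S.chain
      closed := S.closed
      fresh := S.fresh
      elemVis := S.elemVis
      disc := S.disc
      finished := S.finished
      edge := S.edge }
  | case3 w rest st vis hw r ihA ihB =>
    intro hsub hch hnd hadj
    rw [dfsAux, if_neg hw]
    have hwst : w ∉ st := fun h => hw (hsub w h)
    have hchw : List.Chain' G.Adj (w :: st) :=
      List.isChain_cons.mpr ⟨hadj w List.mem_cons_self, hch⟩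
    have hndw : (w :: st).Nodup := List.nodup_cons.mpr ⟨hwst, hnd⟩
    have S1 := ihA
      (by
        intro x hx
        rcases List.mem_cons.mp hx with rfl | hx
        · exact Finset.mem_insert_self _ _
        · exact Finset.mem_insert_of_mem (hsub x hx))
      hchw hndw
      (by
        intro u hu y hy
        simp only [List.head?_cons, Option.mem_def, Option.some.injEq] at hy
        subst hy
        exact (mem_nbrs.mp hu).symm)
    have S2 := ihB
      (fun x hx => Finset.mem_union_left _ (Finset.mem_insert_of_mem (hsub x hx)))
      hch hnd
      (fun u hu => hadj u (List.mem_cons_of_mem w hu))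
    set r2 := dfsAux G rest st (insert w vis ∪ r.1) with hr2def
    show DfsSpec G (w :: rest) st vis (r2.1, insert (w :: st) (r.2 ∪ r2.2))
    have hA1 : insert w vis ⊆ r.1 := S1.mono
    have hA2 : insert w vis ∪ r.1 ⊆ r2.1 := S2.mono
    have hr1sub : r.1 ⊆ r2.1 := fun x hx => hA2 (Finset.mem_union_right _ hx)
    have hvis1 : vis ⊆ r2.1 := fun x hx =>
      hr1sub (hA1 (Finset.mem_insert_of_mem hx))
    have hwin : w ∈ r2.1 := hr1sub (hA1 (Finset.mem_insert_self _ _))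
    have hmem : ∀ s : List (Fin N), s ∈ insert (w :: st) (r.2 ∪ r2.2) ↔
        (s = w :: st ∨ s ∈ r.2 ∨ s ∈ r2.2) := by
      intro s
      simp [Finset.mem_insert, Finset.mem_union]
    refine ⟨?_, ?_, ?_, ?_, ?_, ?_, ?_, ?_, ?_, ?_⟩
    · -- mono
      exact hvis1
    · -- wsVis
      intro u hu
      rcases List.mem_cons.mp hu with rfl | hu
      · exact hwin
      · exact S2.wsVis u hu
    · -- suffix
      intro s hs
      rcases (hmem s).mp hs with rfl | hs | hs
      · exact ⟨List.suffix_cons w st, fun h => by simpa using congrArg List.length h⟩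
      · have h1 := (S1.suffix s hs).1
        refine ⟨(List.suffix_cons w st).trans h1, fun h => ?_⟩
        rw [← h] at h1
        have := h1.length_le
        simp at this
      · exact S2.suffix s hs
    · -- chain
      intro s hs
      rcases (hmem s).mp hs with rfl | hs | hs
      · exact ⟨hchw, hndw⟩
      · exact S1.chain s hs
      · exact S2.chain s hs
    · -- closed
      intro s hs s' hsuf
      rcases (hmem s).mp hs with rfl | hs | hs
      · rcases List.suffix_cons_iff.mp hsuf with rfl | h
        · exact Or.inl ((hmem _).mpr (Or.inl rfl))
        · exact Or.inr h
      · rcases S1.closed s hs s' hsuf with h | h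
        · exact Or.inl ((hmem _).mpr (Or.inr (Or.inl h)))
        · rcases List.suffix_cons_iff.mp h with rfl | h2
          · exact Or.inl ((hmem _).mpr (Or.inl rfl))
          · exact Or.inr h2
      · rcases S2.closed s hs s' hsuf with h | h
        · exact Or.inl ((hmem _).mpr (Or.inr (Or.inr h)))
        · exact Or.inr h
    · -- fresh
      intro s hs x hx
      rcases (hmem s).mp hs with rfl | hs | hs
      · rcases List.mem_cons.mp hx with rfl | hx
        · exact Or.inr hw
        · exact Or.inl hx
      · rcases S1.fresh s hs x hx with h | h
        · rcases List.mem_cons.mp h with rfl | h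
          · exact Or.inr hw
          · exact Or.inl h
        · exact Or.inr (fun hv => h (Finset.mem_insert_of_mem hv))
      · rcases S2.fresh s hs x hx with h | h
        · exact Or.inl h
        · exact Or.inr (fun hv => h (Finset.mem_union_left _ (Finset.mem_insert_of_mem hv)))
    · -- elemVis
      intro s hs x hx
      rcases (hmem s).mp hs with rfl | hs | hs
      · rcases List.mem_cons.mp hx with rfl | hx
        · exact hwin
        · exact hvis1 (hsub x hx)
      · exact hr1sub (S1.elemVis s hs x hx)
      · exact S2.elemVis s hs x hx
    · -- disc
      intro x hx hxv
      by_cases hxw : x = w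
      · subst hxw
        refine ⟨x :: st, (hmem _).mpr (Or.inl rfl), rfl, ?_⟩
        intro s' hs' hxs'
        rcases (hmem s').mp hs' with rfl | hs' | hs'
        · exact List.suffix_rfl
        · exact (S1.suffix s' hs').1
        · exfalso
          rcases S2.fresh s' hs' x hxs' with h | h
          · exact hwst h
          · exact h (Finset.mem_union_left _ (Finset.mem_insert_self _ _))
      · by_cases hxr : x ∈ r.1
        · have hxnew : x ∉ insert w vis := by
            intro h
            rcases Finset.mem_insert.mp h with rfl | h
            · exact hxw rfl
            · exact hxv h
          obtain ⟨s, hs, hhead, hmin⟩ := S1.disc x hxr hxnew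
          refine ⟨s, (hmem _).mpr (Or.inr (Or.inl hs)), hhead, ?_⟩
          intro s' hs' hxs'
          rcases (hmem s').mp hs' with rfl | h | h
          · exfalso
            rcases List.mem_cons.mp hxs' with rfl | hh
            · exact hxw rfl
            · exact hxv (hsub x hh)
          · exact hmin s' h hxs'
          · exfalso
            rcases S2.fresh s' h x hxs' with hh | hh
            · exact hxv (hsub x hh)
            · exact hh (Finset.mem_union_right _ hxr)
        · have hxnew : x ∉ insert w vis ∪ r.1 := by
            intro h
            rcases Finset.mem_union.mp h with h | h
            · rcases Finset.mem_insert.mp h with rfl | h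
              · exact hxw rfl
              · exact hxv h
            · exact hxr h
          obtain ⟨s, hs, hhead, hmin⟩ := S2.disc x hx hxnew
          refine ⟨s, (hmem _).mpr (Or.inr (Or.inr hs)), hhead, ?_⟩
          intro s' hs' hxs'
          rcases (hmem s').mp hs' with rfl | h | h
          · exfalso
            rcases List.mem_cons.mp hxs' with rfl | hh
            · exact hxr (hA1 (Finset.mem_insert_self _ _))
            · exact hxv (hsub x hh)
          · exact absurd (S1.elemVis s' h x hxs') hxr
          · exact hmin s' h hxs'
    · -- finished
      intro x hx hxv y hxy
      by_cases hxw : x = w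
      · subst hxw
        exact hr1sub (S1.wsVis y (mem_nbrs.mpr hxy))
      · by_cases hxr : x ∈ r.1
        · have hxnew : x ∉ insert w vis := by
            intro h
            rcases Finset.mem_insert.mp h with rfl | h
            · exact hxw rfl
            · exact hxv h
          exact hr1sub (S1.finished x hxr hxnew y hxy)
        · have hxnew : x ∉ insert w vis ∪ r.1 := by
            intro h
            rcases Finset.mem_union.mp h with h | h
            · rcases Finset.mem_insert.mp h with rfl | h
              · exact hxw rfl
              · exact hxv h
            · exact hxr h
          exact S2.finished x hx hxnew y hxy
    · -- edge
      intro x hx hxv y hxy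
      by_cases hxw : x = w
      · subst hxw
        have hy1 : y ∈ r.1 := S1.wsVis y (mem_nbrs.mpr hxy)
        by_cases hyv : y ∈ insert x vis
        · rcases Finset.mem_insert.mp hyv with rfl | h
          · exact absurd hxy (G.irrefl)
          · exact Or.inl h
        · obtain ⟨s, hs, hhead, _⟩ := S1.disc y hy1 hyv
          refine Or.inr ⟨s, (hmem _).mpr (Or.inr (Or.inl hs)), ?_, head?_mem hhead⟩
          exact (S1.suffix s hs).1.subset List.mem_cons_self
      · by_cases hxr : x ∈ r.1
        · have hxnew : x ∉ insert w vis := by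
            intro h
            rcases Finset.mem_insert.mp h with rfl | h
            · exact hxw rfl
            · exact hxv h
          rcases S1.edge x hxr hxnew y hxy with h | ⟨s, hs, h1, h2⟩
          · rcases Finset.mem_insert.mp h with rfl | h
            · obtain ⟨s, hs, hhead, _⟩ := S1.disc x hxr hxnew
              refine Or.inr ⟨s, (hmem _).mpr (Or.inr (Or.inl hs)), head?_mem hhead, ?_⟩
              exact (S1.suffix s hs).1.subset List.mem_cons_self
            · exact Or.inl h
          · exact Or.inr ⟨s, (hmem _).mpr (Or.inr (Or.inl hs)), h1, h2⟩
        · have hxnew : x ∉ insert w vis ∪ r.1 := by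
            intro h
            rcases Finset.mem_union.mp h with h | h
            · rcases Finset.mem_insert.mp h with rfl | h
              · exact hxw rfl
              · exact hxv h
            · exact hxr h
          rcases S2.edge x hx hxnew y hxy with h | ⟨s, hs, h1, h2⟩
          · rcases Finset.mem_union.mp h with h | h
            · rcases Finset.mem_insert.mp h with rfl | h
              · exact absurd (S1.wsVis x (mem_nbrs.mpr hxy.symm)) hxr
              · exact Or.inl h
            · by_cases hyv : y ∈ insert w vis
              · rcases Finset.mem_insert.mp hyv with rfl | hh
                · exact absurd (S1.wsVis x (mem_nbrs.mpr hxy.symm)) hxr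
                · exact Or.inl hh
              · exact absurd (S1.finished y h hyv x hxy.symm) hxr
          · exact Or.inr ⟨s, (hmem _).mpr (Or.inr (Or.inr hs)), h1, h2⟩

-- encoding
def encL {N : ℕ} (s : List (Fin N)) : List ℕ := s.reverse.map Fin.val

noncomputable def bagN (N : ℕ) (x : List ℕ) : Finset (Fin N) :=
  (x.filterMap (fun i => if h : i < N then some (⟨i, h⟩ : Fin N) else none)).toFinset

lemma mem_bagN {N : ℕ} (a : Fin N) (x : List ℕ) : a ∈ bagN N x ↔ (a : ℕ) ∈ x := by
  simp only [bagN, List.mem_toFinset, List.mem_filterMap]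
  constructor
  · rintro ⟨i, hi, hd⟩
    split at hd
    · obtain ⟨rfl⟩ : (⟨i, _⟩ : Fin N) = a := by simpa using hd
      simpa using hi
    · simp at hd
  · intro h
    exact ⟨(a : ℕ), h, by simp [a.isLt, Fin.eta]⟩

lemma mem_encL {N : ℕ} (a : Fin N) (s : List (Fin N)) : (a : ℕ) ∈ encL s ↔ a ∈ s := by
  simp [encL, Fin.val_inj]

lemma mem_bag_encL {N : ℕ} (a : Fin N) (s : List (Fin N)) : a ∈ bagN N (encL s) ↔ a ∈ s := by
  rw [mem_bagN, mem_encL]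

lemma encL_prefix {N : ℕ} {s' s : List (Fin N)} (h : s' <:+ s) : encL s' <+: encL s := by
  obtain ⟨t, ht⟩ := List.reverse_prefix.mpr h
  exact ⟨t.map Fin.val, by rw [encL, encL, ← List.map_append, ht]⟩

lemma bagN_mono {N : ℕ} {x y : List ℕ} (h : x <+: y) : bagN N x ⊆ bagN N y := by
  intro a ha
  rw [mem_bagN] at ha ⊢
  exact h.subset ha

lemma encL_length {N : ℕ} (s : List (Fin N)) : (encL s).length = s.length := by
  simp [encL]

lemma decomp_of_no_path {N l : ℕ} {G : SimpleGraph (Fin N)} (hl : ¬ HasPathOfLength G l) :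
    ∃ (T : Finset (List ℕ)) (bag : List ℕ → Finset (Fin N)),
      IsTreeDecomp G T bag ∧ (∀ x ∈ T, x.length < l + 1) ∧ ∀ x ∈ T, (bag x).card ≤ l + 1 := by
  have S := dfsAux_spec G Finset.univ.toList [] ∅ (by simp) List.isChain_nil (by simp) (by simp)
  set out := dfsAux G Finset.univ.toList [] ∅ with hout
  set T : Finset (List ℕ) := insert [] (out.2.image encL) with hT
  have hvisAll : ∀ a : Fin N, a ∈ out.1 := fun a => S.wsVis a (by simp [Finset.mem_toList])
  have hmemT : ∀ x, x ∈ T ↔ x = [] ∨ ∃ s ∈ out.2, encL s = x := by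
    intro x
    simp [hT, Finset.mem_insert, Finset.mem_image]
  have hlen : ∀ s ∈ out.2, s.length ≤ l := fun s hs =>
    length_le_of_no_path hl s (S.chain s hs).1 (S.chain s hs).2
  have hPC : PrefixClosed T := by
    intro x hx y hy
    rcases (hmemT x).mp hx with rfl | ⟨s, hs, rfl⟩
    · rw [List.prefix_nil.mp hy]
      exact (hmemT _).mpr (Or.inl rfl)
    · have hylen : y.length ≤ s.length := by
        have := hy.length_le
        rwa [encL_length] at this
      have hsfx : s.drop (s.length - y.length) <:+ s := List.drop_suffix _ s
      have henc_eq : encL (s.drop (s.length - y.length)) = y := by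
        rw [encL, List.reverse_drop]
        have h1 : s.length - (s.length - y.length) = y.length := by omega
        rw [h1, List.map_take]
        show (List.map Fin.val s.reverse).take y.length = y
        rw [← encL]
        exact (List.prefix_iff_eq_take.mp hy).symm
      rcases S.closed s hs _ hsfx with h | h
      · exact (hmemT _).mpr (Or.inr ⟨_, h, henc_eq⟩)
      · rw [List.suffix_nil.mp h] at henc_eq
        rw [← henc_eq]
        exact (hmemT _).mpr (Or.inl rfl)
  refine ⟨T, bagN N, ⟨hPC, ?_, ?_⟩, ?_, ?_⟩
  · -- vertex_conn
    intro a
    obtain ⟨s₀, hs₀, hhead, hmin⟩ := S.disc a (hvisAll a) (by simp)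
    refine ⟨encL s₀, ⟨(hmemT _).mpr (Or.inr ⟨s₀, hs₀, rfl⟩),
      (mem_bag_encL a s₀).mpr (head?_mem hhead)⟩, ?_⟩
    rintro v ⟨hvT, hav⟩
    rcases (hmemT v).mp hvT with rfl | ⟨s, hs, rfl⟩
    · exfalso
      have := (mem_bagN a []).mp hav
      simp at this
    · have has : a ∈ s := (mem_bag_encL a s).mp hav
      have hsfx : s₀ <:+ s := hmin s hs has
      refine ⟨encL_prefix hsfx, ?_⟩
      intro u hu1 hu2
      refine ⟨hPC _ ((hmemT _).mpr (Or.inr ⟨s, hs, rfl⟩)) u hu2, ?_⟩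
      exact bagN_mono hu1 ((mem_bag_encL a s₀).mpr (head?_mem hhead))
  · -- edge_cover
    intro a b hab
    rcases S.edge a (hvisAll a) (by simp) b hab with h | ⟨s, hs, h1, h2⟩
    · simp at h
    · exact ⟨encL s, (hmemT _).mpr (Or.inr ⟨s, hs, rfl⟩),
        (mem_bag_encL _ _).mpr h1, (mem_bag_encL _ _).mpr h2⟩
  · -- depth
    intro x hx
    rcases (hmemT x).mp hx with rfl | ⟨s, hs, rfl⟩
    · simp
    · rw [encL_length]
      have := hlen s hs
      omega
  · -- width
    intro x hx
    have h1 : (bagN N x).card ≤ x.length :=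
      le_trans (List.toFinset_card_le _) (List.length_filterMap_le _ _)
    rcases (hmemT x).mp hx with rfl | ⟨s, hs, rfl⟩
    · simp [bagN]
    · rw [encL_length] at h1
      have := hlen s hs
      omega

/-- A class of finite graphs has bounded `n`-depth tree-width for some
`n` if and only if it excludes some path as a subgraph. -/
theorem stmt_5 (C : Set (Σ n : ℕ, SimpleGraph (Fin n))) :
    (∃ n k : ℕ, ∀ G ∈ C, ∃ (T : Finset (List ℕ)) (bag : List ℕ → Finset (Fin G.1)),
        IsTreeDecomp G.2 T bag ∧ (∀ x ∈ T, x.length < n) ∧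
        ∀ x ∈ T, (bag x).card ≤ k + 1)
    ↔ (∃ l : ℕ, ∀ G ∈ C, ¬ HasPathOfLength G.2 l) := by
  constructor
  · rintro ⟨n, k, h⟩
    refine ⟨(k + 2) ^ n, fun G hG => ?_⟩
    obtain ⟨T, bag, htd, hd, hw⟩ := h G hG
    exact no_path_of_decomp htd hd hw
  · rintro ⟨l, h⟩
    refine ⟨l + 1, l, fun G hG => ?_⟩
    obtain ⟨T, bag, htd, hd, hw⟩ := decomp_of_no_path (h G hG)
    exact ⟨T, bag, htd, hd, hw⟩
end

section
/- For every graph G and every n ∈ ℕ, the path-width of G satisfies pwd(G) < n·(twd_n(G) + 1). -/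
open scoped Classical

/-- A tree domain is a path if its nodes are linearly ordered by the prefix relation. -/
def IsPathDomain (T : Finset (List ℕ)) : Prop :=
  ∀ u ∈ T, ∀ v ∈ T, u <+: v ∨ v <+: u

lemma nil_le' (l : List ℕ) : [] ≤ l := by
  rcases List.lex_nil_or_eq_nil (r := (· < ·)) l with h | h
  · exact le_of_lt h
  · subst h; exact le_rfl

lemma prefix_le (u v : List ℕ) (h : u <+: v) : u ≤ v := by
  induction u generalizing v with
  | nil => exact nil_le' _
  | cons a u ih =>
    obtain ⟨b, v', rfl⟩ : ∃ b v', v = b :: v' := by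
      cases v with
      | nil => exact absurd h.length_le (by simp)
      | cons b v' => exact ⟨b, v', rfl⟩
    rw [List.cons_prefix_cons] at h
    obtain ⟨rfl, h2⟩ := h
    exact List.cons_le_cons a (ih v' h2)

lemma lex_interval : ∀ (r y z : List ℕ), r <+: z → r ≤ y → y ≤ z → r <+: y := by
  intro r
  induction r with
  | nil => intro y z _ _ _; exact y.nil_prefix
  | cons a r ih =>
    intro y z hz h1 h2
    obtain ⟨c, z', rfl⟩ : ∃ c z', z = c :: z' := by
      cases z with
      | nil => exact absurd hz.length_le (by simp)
      | cons c z' => exact ⟨c, z', rfl⟩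
    rw [List.cons_prefix_cons] at hz
    obtain ⟨rfl, hz'⟩ := hz
    cases y with
    | nil =>
      exfalso
      have : (a :: r : List ℕ) = [] := le_antisymm h1 (nil_le' _)
      simp at this
    | cons b y' =>
      rcases lt_or_eq_of_le h1 with h1 | h1
      · rcases lt_or_eq_of_le h2 with h2 | h2
        · have h1' : List.Lex (· < ·) (a :: r) (b :: y') := h1
          have h2' : List.Lex (· < ·) (b :: y') (a :: z') := h2
          cases h1' with
          | cons h1'' =>
            cases h2' with
            | cons h2'' =>
              rw [List.cons_prefix_cons]
              exact ⟨rfl, ih y' z' hz' (le_of_lt h1'') (le_of_lt h2'')⟩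
            | rel hba => exact absurd hba (lt_irrefl _)
          | rel hab =>
            cases h2' with
            | cons h2'' => exact absurd hab (lt_irrefl _)
            | rel hba => exact absurd (hab.trans hba) (lt_irrefl _)
        · rw [h2, List.cons_prefix_cons]; exact ⟨rfl, hz'⟩
      · rw [← h1]

lemma replicate_prefix_replicate {i j : ℕ} (h : i ≤ j) :
    List.replicate i 0 <+: List.replicate j (0 : ℕ) :=
  ⟨List.replicate (j - i) 0, by rw [← List.replicate_add]; congr 1; omega⟩

lemma prefix_replicate {u : List ℕ} {j : ℕ} (h : u <+: List.replicate j (0:ℕ)) :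
    u = List.replicate u.length 0 ∧ u.length ≤ j := by
  refine ⟨List.eq_replicate_of_mem fun b hb =>
      List.eq_of_mem_replicate (h.subset hb), by simpa using h.length_le⟩

/-- For every finite graph `G` and every `n`, if `G` has a tree
decomposition of height at most `n` and width at most `k` (i.e. `twd_n(G) ≤ k`), then
the path-width of `G` satisfies `pwd(G) < n·(k+1)`: there is a path decomposition all
of whose bags have cardinality at most `n·(k+1)`. -/
theorem stmt_6 {V : Type*} [Fintype V] (G : SimpleGraph V) (n k : ℕ)
    (h : ∃ (T : Finset (List ℕ)) (bag : List ℕ → Finset V),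
      IsTreeDecomp G T bag ∧ (∀ x ∈ T, x.length < n) ∧ ∀ x ∈ T, (bag x).card ≤ k + 1) :
    ∃ (T : Finset (List ℕ)) (bag : List ℕ → Finset V),
      IsTreeDecomp G T bag ∧ IsPathDomain T ∧ ∀ x ∈ T, (bag x).card ≤ n * (k + 1) := by
  classical
  obtain ⟨T, bag, hT, hlen, hcard⟩ := h
  set L := T.sort (· ≤ ·) with hLdef
  have hmemT : ∀ (i : ℕ) (hi : i < L.length), L.get ⟨i, hi⟩ ∈ T := fun i hi =>
    (Finset.mem_sort (α := List ℕ) (· ≤ ·)).mp (List.get_mem _ _)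
  have hmono : ∀ (i j : ℕ) (hi : i < L.length) (hj : j < L.length), i ≤ j →
      L.get ⟨i, hi⟩ ≤ L.get ⟨j, hj⟩ := fun i j hi hj hij =>
    (T.pairwise_sort (· ≤ ·)).rel_get_of_le (Fin.mk_le_mk.mpr hij)
  have hmono' : ∀ (i j : ℕ) (hi : i < L.length) (hj : j < L.length),
      L.get ⟨i, hi⟩ ≤ L.get ⟨j, hj⟩ → i ≤ j := fun i j hi hj hle =>
    Fin.mk_le_mk.mp ((T.sortedLT_sort).strictMono_get.le_iff_le.mp hle)
  have hgetD : ∀ (i : ℕ) (hi : i < L.length), L.getD i [] = L.get ⟨i, hi⟩ :=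
    fun i hi => List.getD_eq_getElem L [] hi
  refine ⟨(Finset.range L.length).image (fun i => List.replicate i 0),
    fun l => (T.filter (fun u => u <+: L.getD l.length [])).biUnion bag,
    ⟨?_, ?_, ?_⟩, ?_, ?_⟩
  · -- prefix closed
    intro x hx y hy
    obtain ⟨i, hi, rfl⟩ := Finset.mem_image.mp hx
    rw [Finset.mem_range] at hi
    obtain ⟨hy1, hy2⟩ := prefix_replicate hy
    exact Finset.mem_image.mpr ⟨y.length, Finset.mem_range.mpr (lt_of_le_of_lt hy2 hi), hy1.symm⟩
  · -- vertex connectivity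
    intro a
    obtain ⟨r, ⟨hrT, hra⟩, hconn⟩ := hT.vertex_conn a
    obtain ⟨⟨i₀, hi₀⟩, hgr⟩ := List.get_of_mem ((Finset.mem_sort (α := List ℕ) (· ≤ ·)).mpr hrT)
    -- key: a is in the bag at position l whenever r is a prefix of L[l]
    have key : ∀ (l : ℕ) (hl : l < L.length), r <+: L.get ⟨l, hl⟩ →
        a ∈ (T.filter (fun u => u <+: L.getD (List.replicate l (0:ℕ)).length [])).biUnion bag := by
      intro l hl hrl
      refine Finset.mem_biUnion.mpr ⟨r, Finset.mem_filter.mpr ⟨hrT, ?_⟩, hra⟩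
      simpa only [List.length_replicate, hgetD l hl] using hrl
    refine ⟨List.replicate i₀ 0, ⟨?_, ?_⟩, ?_⟩
    · exact Finset.mem_image.mpr ⟨i₀, Finset.mem_range.mpr hi₀, rfl⟩
    · exact key i₀ hi₀ (hgr ▸ List.prefix_refl r)
    · rintro v ⟨hv1, hv2⟩
      obtain ⟨j, hj, rfl⟩ := Finset.mem_image.mp hv1
      rw [Finset.mem_range] at hj
      -- from hv2, extract a witness u and deduce r <+: L[j]
      obtain ⟨u, hu, hau⟩ := Finset.mem_biUnion.mp hv2
      rw [Finset.mem_filter] at hu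
      have hupre : u <+: L.get ⟨j, hj⟩ := by
        have := hu.2
        simpa only [List.length_replicate, hgetD j hj] using this
      have hru : r <+: u := (hconn u ⟨hu.1, hau⟩).1
      have hrj : r <+: L.get ⟨j, hj⟩ := hru.trans hupre
      have hi₀j : i₀ ≤ j := by
        apply hmono' i₀ j hi₀ hj
        rw [hgr]
        exact prefix_le _ _ hrj
      refine ⟨replicate_prefix_replicate hi₀j, ?_⟩
      intro w hw1 hw2
      obtain ⟨hw3, hw4⟩ := prefix_replicate hw2
      have hi₀w : i₀ ≤ w.length := by simpa using hw1.length_le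
      have hwL : w.length < L.length := lt_of_le_of_lt hw4 hj
      have hrw : r <+: L.get ⟨w.length, hwL⟩ := by
        apply lex_interval r _ (L.get ⟨j, hj⟩) hrj
        · rw [← hgr]; exact hmono i₀ w.length hi₀ hwL hi₀w
        · exact hmono w.length j hwL hj hw4
      refine ⟨Finset.mem_image.mpr ⟨w.length, Finset.mem_range.mpr hwL, hw3.symm⟩, ?_⟩
      have := key w.length hwL hrw
      rw [hw3]
      exact this
  · -- edge cover
    intro a b hab
    obtain ⟨v, hvT, hva, hvb⟩ := hT.edge_cover a b hab
    obtain ⟨⟨i, hi⟩, hgv⟩ := List.get_of_mem ((Finset.mem_sort (α := List ℕ) (· ≤ ·)).mpr hvT)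
    refine ⟨List.replicate i 0, Finset.mem_image.mpr ⟨i, Finset.mem_range.mpr hi, rfl⟩, ?_, ?_⟩ <;>
    · refine Finset.mem_biUnion.mpr ⟨v, Finset.mem_filter.mpr ⟨hvT, ?_⟩, by assumption⟩
      simp only [List.length_replicate, hgetD i hi, hgv]
      exact hgv ▸ List.prefix_refl v
  · -- path domain
    intro u hu v hv
    obtain ⟨i, _, rfl⟩ := Finset.mem_image.mp hu
    obtain ⟨j, _, rfl⟩ := Finset.mem_image.mp hv
    rcases le_total i j with hij | hij
    · exact Or.inl (replicate_prefix_replicate hij)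
    · exact Or.inr (replicate_prefix_replicate hij)
  · -- cardinality bound
    intro x hx
    obtain ⟨i, hi, rfl⟩ := Finset.mem_image.mp hx
    rw [Finset.mem_range] at hi
    set z := L.get ⟨i, hi⟩ with hz
    have hzT : z ∈ T := hmemT i hi
    have hfilt : (T.filter (fun u => u <+: L.getD (List.replicate i (0:ℕ)).length [])).card ≤ n := by
      have hsub : T.filter (fun u => u <+: L.getD (List.replicate i (0:ℕ)).length []) ⊆
          (Finset.range (z.length + 1)).image (fun t => z.take t) := by
        intro u hu
        rw [Finset.mem_filter] at hu
        have hupre : u <+: z := by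
          simpa only [List.length_replicate, hgetD i hi] using hu.2
        refine Finset.mem_image.mpr ⟨u.length,
          Finset.mem_range.mpr (Nat.lt_succ_of_le hupre.length_le), ?_⟩
        exact (List.prefix_iff_eq_take.mp hupre).symm
      calc (T.filter (fun u => u <+: L.getD (List.replicate i (0:ℕ)).length [])).card
          ≤ ((Finset.range (z.length + 1)).image (fun t => z.take t)).card :=
            Finset.card_le_card hsub
        _ ≤ (Finset.range (z.length + 1)).card := Finset.card_image_le
        _ = z.length + 1 := Finset.card_range _
        _ ≤ n := hlen z hzT
    calc ((T.filter (fun u => u <+: L.getD (List.replicate i (0:ℕ)).length [])).biUnion bag).card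
        ≤ ∑ u ∈ T.filter (fun u => u <+: L.getD (List.replicate i (0:ℕ)).length []), (bag u).card :=
          Finset.card_biUnion_le
      _ ≤ (T.filter (fun u => u <+: L.getD (List.replicate i (0:ℕ)).length [])).card * (k + 1) := by
          apply Finset.sum_le_card_nsmul
          intro u hu
          exact hcard u (Finset.mem_filter.mp hu).1
      _ ≤ n * (k + 1) := Nat.mul_le_mul_right _ hfilt
end

section
/- Let G be a graph with a tree decomposition D = (U_v)_{v∈T} of width k and height at most n+1. If m ∈ ℕ is such that the complete m-ary tree of height n+1 cannot be embedded into T (as an order-preserving injection of partial orders), then the n-depth tree-width of G is less than m·(k+1). -/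
open scoped Classical

/-- The complete `m`-ary order-tree of height `h` (nodes: sequences over `Fin m` of
length `< h`) embeds into the tree domain `T`: there is an injective map into `T`
preserving and reflecting the tree (prefix) order. -/
def EmbedsCompleteTree (m h : ℕ) (T : Finset (List ℕ)) : Prop :=
  ∃ f : List (Fin m) → List ℕ,
    (∀ x : List (Fin m), x.length < h → f x ∈ T) ∧
    (∀ x y : List (Fin m), x.length < h → y.length < h → f x = f y → x = y) ∧
    (∀ x y : List (Fin m), x.length < h → y.length < h → (x <+: y ↔ f x <+: f y))

namespace Stmt7Aux

/-- The subtree of `T` hanging below the child `a` of the root. -/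
def childT (T : Finset (List ℕ)) (a : ℕ) : Finset (List ℕ) :=
  (T.filter fun v => v.head? = some a).image List.tail

lemma mem_childT {T : Finset (List ℕ)} {a : ℕ} {v : List ℕ} :
    v ∈ childT T a ↔ a :: v ∈ T := by
  constructor
  · intro hv
    simp only [childT, Finset.mem_image, Finset.mem_filter] at hv
    obtain ⟨u, ⟨huT, hh⟩, rfl⟩ := hv
    cases u with
    | nil => simp at hh
    | cons b t =>
      simp only [List.head?_cons, Option.some.injEq] at hh
      subst hh
      exact huT
  · intro h
    simp only [childT, Finset.mem_image, Finset.mem_filter]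
    exact ⟨a :: v, ⟨h, rfl⟩, rfl⟩

/-- Glue `m` embeddings of the complete tree of height `N+1` into disjoint child
subtrees into an embedding of height `N+2`. -/
lemma lemB {m N : ℕ} {T : Finset (List ℕ)} (hT : ([] : List ℕ) ∈ T)
    (a : Fin m → ℕ) (hinj : Function.Injective a)
    (hchild : ∀ j, EmbedsCompleteTree m (N + 1) (childT T (a j))) :
    EmbedsCompleteTree m (N + 2) T := by
  choose f hf1 hf2 hf3 using hchild
  refine ⟨fun x => match x with
    | [] => []
    | j :: x' => a j :: f j x', ?_, ?_, ?_⟩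
  · intro x hx
    match x with
    | [] => exact hT
    | j :: x' =>
      have hx' : x'.length < N + 1 := by
        simp only [List.length_cons] at hx; omega
      exact mem_childT.mp (hf1 j x' hx')
  · intro x y hx hy hxy
    match x, y with
    | [], [] => rfl
    | [], j :: y' => simp at hxy
    | j :: x', [] => simp at hxy
    | j :: x', j' :: y' =>
      simp only [List.cons.injEq] at hxy
      obtain ⟨h1, h2⟩ := hxy
      have hj : j = j' := hinj h1
      subst hj
      simp only [List.length_cons] at hx hy
      have := hf2 j x' y' (by omega) (by omega) h2
      rw [this]
  · intro x y hx hy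
    match x, y with
    | [], y =>
      simp only [List.nil_prefix, true_iff]
    | j :: x', [] =>
      simp [List.prefix_nil]
    | j :: x', j' :: y' =>
      simp only [List.length_cons] at hx hy
      rw [List.cons_prefix_cons, List.cons_prefix_cons]
      constructor
      · rintro ⟨rfl, h⟩
        exact ⟨rfl, (hf3 j x' y' (by omega) (by omega)).mp h⟩
      · rintro ⟨h1, h2⟩
        have hj : j = j' := hinj h1
        subst hj
        exact ⟨rfl, (hf3 j x' y' (by omega) (by omega)).mpr h2⟩

/-- The contraction map for the inductive step. -/
def phiStep (I : Finset ℕ) (Φ : ℕ → List ℕ → List ℕ) : List ℕ → List ℕ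
  | [] => []
  | a :: v' =>
    if a ∈ I then
      match v' with
      | [] => []
      | h :: t => (2 * Nat.pair a h + 1) :: t
    else 2 * a :: Φ a v'

lemma phiStep_nil {I : Finset ℕ} {Φ : ℕ → List ℕ → List ℕ} : phiStep I Φ [] = [] := rfl

lemma phiStep_one {I : Finset ℕ} {Φ : ℕ → List ℕ → List ℕ} {a : ℕ} (ha : a ∈ I) :
    phiStep I Φ [a] = [] := by simp [phiStep, ha]

lemma phiStep_two {I : Finset ℕ} {Φ : ℕ → List ℕ → List ℕ} {a h : ℕ} {t : List ℕ}
    (ha : a ∈ I) : phiStep I Φ (a :: h :: t) = (2 * Nat.pair a h + 1) :: t := by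
  simp [phiStep, ha]

lemma phiStep_not {I : Finset ℕ} {Φ : ℕ → List ℕ → List ℕ} {a : ℕ} (ha : a ∉ I)
    (v' : List ℕ) : phiStep I Φ (a :: v') = 2 * a :: Φ a v' := by
  simp [phiStep, ha]

/-- Main contraction lemma: if the complete `m`-ary tree of height `N+1` does not embed
into the prefix-closed `T` of height at most `N+1`, then there is a contraction map `φ`
of `T` to height at most `N` with all fibers of size at most `m`, monotone and with the
interval-lifting property. -/
lemma lemA (m : ℕ) : ∀ (N : ℕ) (T : Finset (List ℕ)), PrefixClosed T →
    (∀ x ∈ T, x.length < N + 1) → ¬ EmbedsCompleteTree m (N + 1) T →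
    ∃ φ : List ℕ → List ℕ,
      φ [] = [] ∧
      (∀ v ∈ T, (φ v).length < N) ∧
      (∀ w : List ℕ, (T.filter fun v => φ v = w).card ≤ m) ∧
      (∀ v ∈ T, ∀ u ∈ T, v <+: u → φ v <+: φ u) ∧
      (∀ v ∈ T, ∀ u ∈ T, v <+: u → ∀ w' : List ℕ, φ v <+: w' → w' <+: φ u →
        ∃ u' ∈ T, v <+: u' ∧ u' <+: u ∧ φ u' = w') := by
  intro N
  induction N with
  | zero =>
    intro T hpc hht hemb
    rcases T.eq_empty_or_nonempty with rfl | ⟨x, hx⟩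
    · exact ⟨id, rfl, by simp, by simp, by simp, by simp⟩
    · exfalso
      apply hemb
      have h0 : ([] : List ℕ) ∈ T := hpc x hx [] (List.nil_prefix)
      refine ⟨fun _ => [], fun _ _ => h0, ?_, ?_⟩
      · intro x y hx hy _
        have hx0 : x = [] := List.eq_nil_of_length_eq_zero (by omega)
        have hy0 : y = [] := List.eq_nil_of_length_eq_zero (by omega)
        rw [hx0, hy0]
      · intro x y hx hy
        have hx0 : x = [] := List.eq_nil_of_length_eq_zero (by omega)
        have hy0 : y = [] := List.eq_nil_of_length_eq_zero (by omega)
        subst hx0; subst hy0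
        simp
  | succ N IH =>
    intro T hpc hht hemb
    rcases T.eq_empty_or_nonempty with rfl | ⟨x0, hx0⟩
    · exact ⟨id, rfl, by simp, by simp, by simp, by simp⟩
    have hnilT : ([] : List ℕ) ∈ T := hpc x0 hx0 [] (List.nil_prefix)
    -- child subtrees
    have hcpc : ∀ a : ℕ, PrefixClosed (childT T a) := by
      intro a x hx y hy
      rw [mem_childT] at hx ⊢
      exact hpc _ hx _ (List.cons_prefix_cons.mpr ⟨rfl, hy⟩)
    have hcht : ∀ a : ℕ, ∀ x ∈ childT T a, x.length < N + 1 := by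
      intro a x hx
      have := hht _ (mem_childT.mp hx)
      simp only [List.length_cons] at this
      omega
    -- the set of "fat" children
    set I : Finset ℕ := ((T.filter fun v => v.length = 1).image fun v => v.headI).filter
      (fun a => EmbedsCompleteTree m (N + 1) (childT T a)) with hIdef
    have hmemI : ∀ a : ℕ, a ∈ I ↔
        ([a] ∈ T ∧ EmbedsCompleteTree m (N + 1) (childT T a)) := by
      intro a
      simp only [hIdef, Finset.mem_filter, Finset.mem_image]
      constructor
      · rintro ⟨⟨v, ⟨hvT, hlen⟩, rfl⟩, he⟩
        obtain ⟨b, rfl⟩ := List.length_eq_one_iff.mp hlen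
        exact ⟨by simpa using hvT, he⟩
      · rintro ⟨h1, h2⟩
        exact ⟨⟨[a], ⟨h1, rfl⟩, rfl⟩, h2⟩
    -- fewer than m fat children
    have hIm : I.card < m := by
      by_contra hcon
      push_neg at hcon
      obtain ⟨t, htI, htc⟩ := Finset.exists_subset_card_eq hcon
      have e : Fin m ≃ {x // x ∈ t} := (Fin.castOrderIso htc.symm).toEquiv.trans t.equivFin.symm
      set a : Fin m → ℕ := fun j => (e j : ℕ) with hadef
      have hainj : Function.Injective a :=
        Subtype.coe_injective.comp e.injective
      have hch : ∀ j, EmbedsCompleteTree m (N + 1) (childT T (a j)) := by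
        intro j
        exact ((hmemI (a j)).mp (htI (e j).2)).2
      exact hemb (lemB hnilT a hainj hch)
    have hm1 : 1 ≤ m := by omega
    -- thin children do not embed the complete tree of height N+1
    have hcne : ∀ a : ℕ, a ∉ I → ¬ EmbedsCompleteTree m (N + 1) (childT T a) := by
      intro a ha
      by_cases h1 : [a] ∈ T
      · intro he; exact ha ((hmemI a).mpr ⟨h1, he⟩)
      · intro he
        obtain ⟨f, hf1, -, -⟩ := he
        have hmem : f [] ∈ childT T a := hf1 [] (by simp)
        have : a :: f [] ∈ T := mem_childT.mp hmem
        exact h1 (hpc _ this [a] (List.cons_prefix_cons.mpr ⟨rfl, List.nil_prefix⟩))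
    -- choose contraction maps for the thin children
    have hΦex : ∀ a : ℕ, ∃ g : List ℕ → List ℕ, a ∉ I →
        (g [] = [] ∧
        (∀ v ∈ childT T a, (g v).length < N) ∧
        (∀ w : List ℕ, ((childT T a).filter fun v => g v = w).card ≤ m) ∧
        (∀ v ∈ childT T a, ∀ u ∈ childT T a, v <+: u → g v <+: g u) ∧
        (∀ v ∈ childT T a, ∀ u ∈ childT T a, v <+: u → ∀ w' : List ℕ,
          g v <+: w' → w' <+: g u →
          ∃ u' ∈ childT T a, v <+: u' ∧ u' <+: u ∧ g u' = w')) := by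
      intro a
      by_cases ha : a ∈ I
      · exact ⟨id, fun h => absurd ha h⟩
      · obtain ⟨g, hg⟩ := IH (childT T a) (hcpc a) (hcht a) (hcne a ha)
        exact ⟨g, fun _ => hg⟩
    choose Φ hΦ using hΦex
    refine ⟨phiStep I Φ, rfl, ?_, ?_, ?_, ?_⟩
    -- heights
    · intro v hv
      cases v with
      | nil => simp [phiStep_nil]
      | cons a v' =>
        by_cases ha : a ∈ I
        · cases v' with
          | nil => rw [phiStep_one ha]; simp
          | cons h t =>
            rw [phiStep_two ha]
            have := hht _ hv
            simp only [List.length_cons] at this ⊢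
            omega
        · rw [phiStep_not ha]
          have hg2 := (hΦ a ha).2.1
          have := hg2 v' (mem_childT.mpr hv)
          simp only [List.length_cons]
          omega
    -- fiber sizes
    · intro w
      cases w with
      | nil =>
        have hsub : (T.filter fun v => phiStep I Φ v = []) ⊆
            insert [] (I.image fun a => [a]) := by
          intro v hv
          rw [Finset.mem_filter] at hv
          obtain ⟨hvT, hveq⟩ := hv
          cases v with
          | nil => exact Finset.mem_insert_self _ _
          | cons a v' =>
            by_cases ha : a ∈ I
            · cases v' with
              | nil =>
                refine Finset.mem_insert_of_mem ?_
                exact Finset.mem_image.mpr ⟨a, ha, rfl⟩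
              | cons h t => rw [phiStep_two ha] at hveq; simp at hveq
            · rw [phiStep_not ha] at hveq; simp at hveq
        calc (T.filter fun v => phiStep I Φ v = []).card
            ≤ (insert [] (I.image fun a => [a])).card := Finset.card_le_card hsub
          _ ≤ (I.image fun a => [a]).card + 1 := Finset.card_insert_le _ _
          _ ≤ I.card + 1 := by
              have := Finset.card_image_le (s := I) (f := fun a => [a])
              omega
          _ ≤ m := by omega
      | cons c w' =>
        rcases Nat.even_or_odd c with he | ho
        · -- even head: image of a fiber of a thin child
          obtain ⟨a, ha2⟩ := he
          have hc2 : c = 2 * a := by omega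
          subst hc2
          by_cases ha : a ∈ I
          · have hempty : (T.filter fun v => phiStep I Φ v = 2 * a :: w') = ∅ := by
              rw [Finset.eq_empty_iff_forall_notMem]
              intro v hv
              rw [Finset.mem_filter] at hv
              obtain ⟨hvT, hveq⟩ := hv
              cases v with
              | nil => simp [phiStep_nil] at hveq
              | cons b v' =>
                by_cases hb : b ∈ I
                · cases v' with
                  | nil => rw [phiStep_one hb] at hveq; simp at hveq
                  | cons h t =>
                    rw [phiStep_two hb] at hveq
                    simp only [List.cons.injEq] at hveq
                    omega
                · rw [phiStep_not hb] at hveq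
                  simp only [List.cons.injEq] at hveq
                  have : b = a := by omega
                  subst this
                  exact hb ha
            rw [hempty]
            simp
          · have hsub : (T.filter fun v => phiStep I Φ v = 2 * a :: w') ⊆
                (((childT T a).filter fun v => Φ a v = w').image (a :: ·)) := by
              intro v hv
              rw [Finset.mem_filter] at hv
              obtain ⟨hvT, hveq⟩ := hv
              cases v with
              | nil => simp [phiStep_nil] at hveq
              | cons b v' =>
                by_cases hb : b ∈ I
                · cases v' with
                  | nil => rw [phiStep_one hb] at hveq; simp at hveq
                  | cons h t =>
                    rw [phiStep_two hb] at hveq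
                    simp only [List.cons.injEq] at hveq
                    omega
                · rw [phiStep_not hb] at hveq
                  simp only [List.cons.injEq] at hveq
                  obtain ⟨hb2, hΦeq⟩ := hveq
                  have : b = a := by omega
                  subst this
                  refine Finset.mem_image.mpr ⟨v', ?_, rfl⟩
                  exact Finset.mem_filter.mpr ⟨mem_childT.mpr hvT, hΦeq⟩
            have hg3 := (hΦ a ha).2.2.1
            calc (T.filter fun v => phiStep I Φ v = 2 * a :: w').card
                ≤ (((childT T a).filter fun v => Φ a v = w').image (a :: ·)).card :=
                  Finset.card_le_card hsub
              _ ≤ ((childT T a).filter fun v => Φ a v = w').card := Finset.card_image_le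
              _ ≤ m := hg3 w'
        · -- odd head: singleton fiber
          obtain ⟨q, hq⟩ := ho
          have hsub : (T.filter fun v => phiStep I Φ v = c :: w') ⊆
              {q.unpair.1 :: q.unpair.2 :: w'} := by
            intro v hv
            rw [Finset.mem_filter] at hv
            obtain ⟨hvT, hveq⟩ := hv
            cases v with
            | nil => simp [phiStep_nil] at hveq
            | cons b v' =>
              by_cases hb : b ∈ I
              · cases v' with
                | nil => rw [phiStep_one hb] at hveq; simp at hveq
                | cons h t =>
                  rw [phiStep_two hb] at hveq
                  simp only [List.cons.injEq] at hveq
                  obtain ⟨hhead, rfl⟩ := hveq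
                  have hpq : Nat.pair b h = q := by omega
                  have hb' : b = q.unpair.1 := by rw [← hpq, Nat.unpair_pair]
                  have hh' : h = q.unpair.2 := by rw [← hpq, Nat.unpair_pair]
                  subst hb'; subst hh'
                  exact Finset.mem_singleton_self _
              · rw [phiStep_not hb] at hveq
                simp only [List.cons.injEq] at hveq
                omega
          calc (T.filter fun v => phiStep I Φ v = c :: w').card
              ≤ ({q.unpair.1 :: q.unpair.2 :: w'} : Finset (List ℕ)).card :=
                Finset.card_le_card hsub
            _ = 1 := Finset.card_singleton _
            _ ≤ m := hm1
    -- monotonicity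
    · intro v hv u hu hvu
      cases v with
      | nil => rw [phiStep_nil]; exact List.nil_prefix
      | cons a v' =>
        cases u with
        | nil => exact absurd (List.prefix_nil.mp hvu) (by simp)
        | cons b u' =>
          obtain ⟨hab, hvu'⟩ := List.cons_prefix_cons.mp hvu
          subst hab
          by_cases ha : a ∈ I
          · cases v' with
            | nil => rw [phiStep_one ha]; exact List.nil_prefix
            | cons h t =>
              cases u' with
              | nil => exact absurd (List.prefix_nil.mp hvu') (by simp)
              | cons h' t' =>
                obtain ⟨hhh, htt⟩ := List.cons_prefix_cons.mp hvu'
                subst hhh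
                rw [phiStep_two ha, phiStep_two ha]
                exact List.cons_prefix_cons.mpr ⟨rfl, htt⟩
          · rw [phiStep_not ha, phiStep_not ha]
            have hg4 := (hΦ a ha).2.2.2.1
            exact List.cons_prefix_cons.mpr
              ⟨rfl, hg4 v' (mem_childT.mpr hv) u' (mem_childT.mpr hu) hvu'⟩
    -- interval lifting
    · intro v hv u hu hvu w' hw1 hw2
      cases u with
      | nil =>
        have hv0 : v = [] := List.prefix_nil.mp hvu
        subst hv0
        rw [phiStep_nil] at hw1 hw2
        have hw0 : w' = [] := List.prefix_nil.mp hw2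
        exact ⟨[], hu, List.prefix_refl _, List.prefix_refl _, by rw [hw0]; rfl⟩
      | cons a u₀ =>
        by_cases ha : a ∈ I
        · cases u₀ with
          | nil =>
            rw [phiStep_one ha] at hw2
            have hw0 : w' = [] := List.prefix_nil.mp hw2
            subst hw0
            have hφv : phiStep I Φ v = [] := List.prefix_nil.mp hw1
            exact ⟨v, hv, List.prefix_refl _, hvu, hφv⟩
          | cons h t =>
            rw [phiStep_two ha] at hw2
            cases v with
            | nil =>
              rw [phiStep_nil] at hw1
              cases w' with
              | nil => exact ⟨[], hnilT, List.prefix_refl _, List.nil_prefix, rfl⟩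
              | cons c t₀ =>
                obtain ⟨hc, ht₀⟩ := List.cons_prefix_cons.mp hw2
                subst hc
                refine ⟨a :: h :: t₀, ?_, List.nil_prefix, ?_, ?_⟩
                · exact hpc _ hu _ (List.cons_prefix_cons.mpr ⟨rfl,
                    List.cons_prefix_cons.mpr ⟨rfl, ht₀⟩⟩)
                · exact List.cons_prefix_cons.mpr ⟨rfl,
                    List.cons_prefix_cons.mpr ⟨rfl, ht₀⟩⟩
                · rw [phiStep_two ha]
            | cons b v₀ =>
              obtain ⟨hab, hv₀⟩ := List.cons_prefix_cons.mp hvu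
              subst hab
              cases v₀ with
              | nil =>
                rw [phiStep_one ha] at hw1
                cases w' with
                | nil =>
                  exact ⟨[b], hv, List.prefix_refl _,
                    List.cons_prefix_cons.mpr ⟨rfl, List.nil_prefix⟩, phiStep_one ha⟩
                | cons c t₀ =>
                  obtain ⟨hc, ht₀⟩ := List.cons_prefix_cons.mp hw2
                  subst hc
                  refine ⟨b :: h :: t₀, ?_,
                    List.cons_prefix_cons.mpr ⟨rfl, List.nil_prefix⟩, ?_, ?_⟩
                  · exact hpc _ hu _ (List.cons_prefix_cons.mpr ⟨rfl,
                      List.cons_prefix_cons.mpr ⟨rfl, ht₀⟩⟩)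
                  · exact List.cons_prefix_cons.mpr ⟨rfl,
                      List.cons_prefix_cons.mpr ⟨rfl, ht₀⟩⟩
                  · rw [phiStep_two ha]
              | cons h₀ t₀ =>
                obtain ⟨hh₀, ht₀⟩ := List.cons_prefix_cons.mp hv₀
                subst hh₀
                rw [phiStep_two ha] at hw1
                cases w' with
                | nil => exact absurd (List.prefix_nil.mp hw1) (by simp)
                | cons c t₁ =>
                  obtain ⟨hc, ht₀₁⟩ := List.cons_prefix_cons.mp hw1
                  subst hc
                  obtain ⟨-, ht₁⟩ := List.cons_prefix_cons.mp hw2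
                  refine ⟨b :: h₀ :: t₁, ?_,
                    List.cons_prefix_cons.mpr ⟨rfl,
                      List.cons_prefix_cons.mpr ⟨rfl, ht₀₁⟩⟩, ?_, ?_⟩
                  · exact hpc _ hu _ (List.cons_prefix_cons.mpr ⟨rfl,
                      List.cons_prefix_cons.mpr ⟨rfl, ht₁⟩⟩)
                  · exact List.cons_prefix_cons.mpr ⟨rfl,
                      List.cons_prefix_cons.mpr ⟨rfl, ht₁⟩⟩
                  · rw [phiStep_two ha]
        · -- a ∉ I
          obtain ⟨hg1, hg2, hg3, hg4, hg5⟩ := hΦ a ha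
          have hu₀ : u₀ ∈ childT T a := mem_childT.mpr hu
          rw [phiStep_not ha] at hw2
          cases v with
          | nil =>
            rw [phiStep_nil] at hw1
            cases w' with
            | nil => exact ⟨[], hnilT, List.prefix_refl _, List.nil_prefix, rfl⟩
            | cons c w₀ =>
              obtain ⟨hc, hw₀⟩ := List.cons_prefix_cons.mp hw2
              subst hc
              have h0c : ([] : List ℕ) ∈ childT T a := by
                rw [mem_childT]
                exact hpc _ hu _ (List.cons_prefix_cons.mpr ⟨rfl, List.nil_prefix⟩)
              obtain ⟨u₀', hu₀'mem, -, hu₀'pre, hφ'⟩ :=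
                hg5 [] h0c u₀ hu₀ (List.nil_prefix) w₀
                  (by rw [hg1]; exact List.nil_prefix) hw₀
              refine ⟨a :: u₀', mem_childT.mp hu₀'mem, List.nil_prefix,
                List.cons_prefix_cons.mpr ⟨rfl, hu₀'pre⟩, ?_⟩
              rw [phiStep_not ha, hφ']
          | cons b v₀ =>
            obtain ⟨hab, hv₀⟩ := List.cons_prefix_cons.mp hvu
            subst hab
            rw [phiStep_not ha] at hw1
            cases w' with
            | nil => exact absurd (List.prefix_nil.mp hw1) (by simp)
            | cons c w₀ =>
              obtain ⟨hc, hw₀1⟩ := List.cons_prefix_cons.mp hw1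
              subst hc
              obtain ⟨-, hw₀2⟩ := List.cons_prefix_cons.mp hw2
              have hv₀mem : v₀ ∈ childT T b := mem_childT.mpr hv
              obtain ⟨u₀', hu₀'mem, hv₀pre, hu₀'pre, hφ'⟩ :=
                hg5 v₀ hv₀mem u₀ hu₀ hv₀ w₀ hw₀1 hw₀2
              refine ⟨b :: u₀', mem_childT.mp hu₀'mem,
                List.cons_prefix_cons.mpr ⟨rfl, hv₀pre⟩,
                List.cons_prefix_cons.mpr ⟨rfl, hu₀'pre⟩, ?_⟩
              rw [phiStep_not ha, hφ']

end Stmt7Aux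

open Stmt7Aux in
/-- Let `G` have a tree decomposition of width `k` and height at most
`n+1` whose underlying tree `T` does not admit an embedding of the complete `m`-ary tree
of height `n+1`. Then `twd_n(G) < m·(k+1)`: `G` has a tree decomposition of height at
most `n` with all bags of cardinality at most `m·(k+1)`. -/
theorem stmt_7 {V : Type*} [Fintype V] (G : SimpleGraph V) (n k m : ℕ)
    (T : Finset (List ℕ)) (bag : List ℕ → Finset V)
    (hTD : IsTreeDecomp G T bag)
    (hw : ∀ x ∈ T, (bag x).card ≤ k + 1)
    (hh : ∀ x ∈ T, x.length < n + 1)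
    (hemb : ¬ EmbedsCompleteTree m (n + 1) T) :
    ∃ (T' : Finset (List ℕ)) (bag' : List ℕ → Finset V),
      IsTreeDecomp G T' bag' ∧ (∀ x ∈ T', x.length < n) ∧
      ∀ x ∈ T', (bag' x).card ≤ m * (k + 1) := by
  obtain ⟨φ, hP1, hP2, hP3, hP4, hP5⟩ := lemA m n T hTD.prefix_closed hh hemb
  refine ⟨T.image φ, fun w => (T.filter fun v => φ v = w).biUnion bag, ?_, ?_, ?_⟩
  · constructor
    · -- prefix closed
      intro x hx y hy
      obtain ⟨u, hu, rfl⟩ := Finset.mem_image.mp hx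
      have hnilT : ([] : List ℕ) ∈ T := hTD.prefix_closed u hu [] (List.nil_prefix)
      obtain ⟨u', hu', -, -, hφu'⟩ :=
        hP5 [] hnilT u hu (List.nil_prefix) y (by rw [hP1]; exact List.nil_prefix) hy
      exact Finset.mem_image.mpr ⟨u', hu', hφu'⟩
    · -- vertex connectivity
      intro a
      obtain ⟨r, ⟨hrT, hra⟩, hr⟩ := hTD.vertex_conn a
      refine ⟨φ r, ⟨Finset.mem_image.mpr ⟨r, hrT, rfl⟩, ?_⟩, ?_⟩
      · exact Finset.mem_biUnion.mpr ⟨r, Finset.mem_filter.mpr ⟨hrT, rfl⟩, hra⟩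
      · rintro w ⟨hwT', hwa⟩
        obtain ⟨v, hvfil, hva⟩ := Finset.mem_biUnion.mp hwa
        rw [Finset.mem_filter] at hvfil
        obtain ⟨hvT, hφv⟩ := hvfil
        have hrv : r <+: v := (hr v ⟨hvT, hva⟩).1
        constructor
        · rw [← hφv]
          exact hP4 r hrT v hvT hrv
        · intro u hru huw
          rw [← hφv] at huw
          obtain ⟨u', hu'T, hru', hu'v, hφu'⟩ := hP5 r hrT v hvT hrv u hru huw
          have hu'S : u' ∈ {v | v ∈ T ∧ a ∈ bag v} := (hr v ⟨hvT, hva⟩).2 u' hru' hu'v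
          exact ⟨Finset.mem_image.mpr ⟨u', hu'T, hφu'⟩,
            Finset.mem_biUnion.mpr ⟨u', Finset.mem_filter.mpr ⟨hu'S.1, hφu'⟩, hu'S.2⟩⟩
    · -- edge cover
      intro a b hab
      obtain ⟨v, hvT, hav, hbv⟩ := hTD.edge_cover a b hab
      refine ⟨φ v, Finset.mem_image.mpr ⟨v, hvT, rfl⟩, ?_, ?_⟩
      · exact Finset.mem_biUnion.mpr ⟨v, Finset.mem_filter.mpr ⟨hvT, rfl⟩, hav⟩
      · exact Finset.mem_biUnion.mpr ⟨v, Finset.mem_filter.mpr ⟨hvT, rfl⟩, hbv⟩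
  · -- heights
    intro x hx
    obtain ⟨v, hv, rfl⟩ := Finset.mem_image.mp hx
    exact hP2 v hv
  · -- bag sizes
    intro x hx
    calc ((T.filter fun v => φ v = x).biUnion bag).card
        ≤ ∑ v ∈ T.filter fun v => φ v = x, (bag v).card := Finset.card_biUnion_le
      _ ≤ ∑ _v ∈ T.filter fun v => φ v = x, (k + 1) := by
          refine Finset.sum_le_sum ?_
          intro v hv
          exact hw v (Finset.mem_filter.mp hv).1
      _ = (T.filter fun v => φ v = x).card * (k + 1) := by
          rw [Finset.sum_const, smul_eq_mul]
      _ ≤ m * (k + 1) := Nat.mul_le_mul_right _ (hP3 x)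
end

section
/- If tree-depth td(G) ≤ n then the n-depth tree-width satisfies twd_n(G) < n; conversely, if twd_n(G) < k then td(G) ≤ n·k. -/
open scoped Classical

/-- `td(G) ≤ n`: there is a rooted forest of height `n` on the vertices of `G`
(placing vertices injectively at nodes of level `< n`) such that every edge of `G`
joins an ancestor-descendant pair (comparable in the prefix order). -/
def TreeDepthLE {V : Type*} (G : SimpleGraph V) (n : ℕ) : Prop :=
  ∃ pos : V → List ℕ, Function.Injective pos ∧ (∀ v, (pos v).length < n) ∧
    ∀ u v, G.Adj u v → pos u <+: pos v ∨ pos v <+: pos u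

/-- Encoding of a tree node as a path with `k-1` padding slots before each digit. -/
def encAux (k : ℕ) : List ℕ → List ℕ
  | [] => []
  | d :: p => (List.replicate (k-1) 0 ++ [d+1]) ++ encAux k p

lemma encAux_append (k : ℕ) (p q : List ℕ) :
    encAux k (p ++ q) = encAux k p ++ encAux k q := by
  induction p with
  | nil => simp [encAux]
  | cons d p ih => simp [encAux, ih]

lemma encAux_length (k : ℕ) (hk : 1 ≤ k) (p : List ℕ) :
    (encAux k p).length = k * p.length := by
  induction p with
  | nil => simp [encAux]
  | cons d p ih => simp [encAux, ih, Nat.mul_succ]; omega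

/-- Decoding: drop padding zeros and subtract one from each digit. -/
def decAux (l : List ℕ) : List ℕ := (l.filter (· ≠ 0)).map (· - 1)

lemma decAux_append (l m : List ℕ) : decAux (l ++ m) = decAux l ++ decAux m := by
  simp [decAux, List.filter_append]

lemma decAux_enc (k i : ℕ) (p : List ℕ) :
    decAux (encAux k p ++ List.replicate i 0) = p := by
  induction p with
  | nil => simp [encAux, decAux, List.filter_replicate]
  | cons d p ih =>
      show decAux ((List.replicate (k-1) 0 ++ [d+1]) ++ encAux k p ++ List.replicate i 0) = d :: p
      rw [List.append_assoc, decAux_append, ih, decAux_append]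
      simp [decAux, List.filter_replicate]

lemma rep_prefix {a : ℕ} {i j : ℕ} (h : i ≤ j) :
    List.replicate i a <+: List.replicate j a := by
  refine ⟨List.replicate (j - i) a, ?_⟩
  rw [← List.replicate_add]
  congr 1
  omega

/-- If `td(G) ≤ n` then `twd_n(G) < n` (a tree decomposition of height
at most `n` with bags of cardinality at most `n`); conversely, if `twd_n(G) < k` (a tree
decomposition of height at most `n` with bags of cardinality at most `k`) then
`td(G) ≤ n·k`. -/
theorem stmt_8 {V : Type*} [Fintype V] (G : SimpleGraph V) (n k : ℕ) :
    (TreeDepthLE G n →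
      ∃ (T : Finset (List ℕ)) (bag : List ℕ → Finset V),
        IsTreeDecomp G T bag ∧ (∀ x ∈ T, x.length < n) ∧ ∀ x ∈ T, (bag x).card ≤ n) ∧
    ((∃ (T : Finset (List ℕ)) (bag : List ℕ → Finset V),
        IsTreeDecomp G T bag ∧ (∀ x ∈ T, x.length < n) ∧ ∀ x ∈ T, (bag x).card ≤ k) →
      TreeDepthLE G (n * k)) := by
  constructor
  · -- forward direction
    rintro ⟨pos, hinj, hlen, hcomp⟩
    refine ⟨Finset.univ.biUnion (fun v => (pos v).inits.toFinset),
      fun x => Finset.univ.filter (fun v => pos v <+: x), ?_, ?_, ?_⟩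
    · have hmem : ∀ x : List ℕ,
          x ∈ Finset.univ.biUnion (fun v : V => (pos v).inits.toFinset) ↔
            ∃ v, x <+: pos v := by
        intro x
        simp [Finset.mem_biUnion, List.mem_inits]
      constructor
      · intro x hx y hy
        obtain ⟨v, hv⟩ := (hmem x).mp hx
        exact (hmem y).mpr ⟨v, hy.trans hv⟩
      · intro a
        refine ⟨pos a, ⟨(hmem _).mpr ⟨a, List.prefix_rfl⟩, ?_⟩, ?_⟩
        · simp
        · rintro v ⟨hvT, hav⟩
          simp only [Finset.mem_filter] at hav
          refine ⟨hav.2, ?_⟩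
          intro u hau huv
          obtain ⟨w, hw⟩ := (hmem v).mp hvT
          exact ⟨(hmem u).mpr ⟨w, huv.trans hw⟩, by simp [hau]⟩
      · intro a b hab
        rcases hcomp a b hab with h | h
        · exact ⟨pos b, (hmem _).mpr ⟨b, List.prefix_rfl⟩, by simp [h], by simp⟩
        · exact ⟨pos a, (hmem _).mpr ⟨a, List.prefix_rfl⟩, by simp, by simp [h]⟩
    · intro x hx
      simp only [Finset.mem_biUnion, List.mem_toFinset, List.mem_inits] at hx
      obtain ⟨v, _, hv⟩ := hx
      exact lt_of_le_of_lt hv.length_le (hlen v)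
    · intro x hx
      have h : ((Finset.univ.filter (fun v => pos v <+: x)).card ≤ (Finset.range n).card) := by
        apply Finset.card_le_card_of_injOn (fun v => (pos v).length)
        · intro a ha
          simp only [Finset.mem_range]
          exact Finset.mem_coe.mpr (Finset.mem_range.mpr (hlen a))
        · intro a ha b hb hab
          simp only [Finset.coe_filter, Set.mem_setOf_eq, Finset.mem_filter] at ha hb
          apply hinj
          rcases List.prefix_or_prefix_of_prefix ha.2 hb.2 with h | h
          · exact List.IsPrefix.eq_of_length h hab
          · exact (List.IsPrefix.eq_of_length h hab.symm).symm
      simpa using h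
  · -- converse direction
    rintro ⟨T, bag, hd, hht, hw⟩
    by_cases hV : IsEmpty V
    · exact ⟨fun _ => [], fun a => isEmptyElim a, fun v => isEmptyElim v,
        fun u => isEmptyElim u⟩
    rw [not_isEmpty_iff] at hV
    have hconn := hd.vertex_conn
    set r : V → List ℕ := fun a => (hconn a).choose with hrdef
    have hrS : ∀ a, r a ∈ T ∧ a ∈ bag (r a) := fun a => (hconn a).choose_spec.1
    have hrmin : ∀ a v, v ∈ T → a ∈ bag v → r a <+: v :=
      fun a v hv hav => ((hconn a).choose_spec.2 v ⟨hv, hav⟩).1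
    have hk : 1 ≤ k := by
      obtain ⟨a0⟩ := hV
      have h1 : 0 < (bag (r a0)).card := Finset.card_pos.mpr ⟨a0, (hrS a0).2⟩
      exact lt_of_lt_of_le h1 (hw _ (hrS a0).1)
    set idx : V → ℕ := fun a => List.idxOf a ((bag (r a)).toList) with hidxdef
    have hidx_lt : ∀ a, idx a < k := by
      intro a
      have h1 : idx a < ((bag (r a)).toList).length :=
        List.idxOf_lt_length_iff.mpr (Finset.mem_toList.mpr (hrS a).2)
      rw [Finset.length_toList] at h1
      exact lt_of_lt_of_le h1 (hw _ (hrS a).1)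
    set pos : V → List ℕ := fun a => encAux k (r a) ++ List.replicate (idx a) 0 with hposdef
    have hdec : ∀ a, decAux (pos a) = r a := fun a => decAux_enc k (idx a) (r a)
    -- comparability helpers
    have hsame : ∀ u v : V, r u = r v → pos u <+: pos v ∨ pos v <+: pos u := by
      intro u v h
      rcases le_total (idx u) (idx v) with hle | hle
      · left
        show encAux k (r u) ++ _ <+: encAux k (r v) ++ _
        rw [← h]
        exact (List.prefix_append_right_inj _).mpr (rep_prefix hle)
      · right
        show encAux k (r v) ++ _ <+: encAux k (r u) ++ _
        rw [h]
        exact (List.prefix_append_right_inj _).mpr (rep_prefix hle)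
    have hstrict : ∀ u v : V, r u <+: r v → r u ≠ r v → pos u <+: pos v := by
      intro u v h hne
      obtain ⟨t, ht⟩ := h
      match t, ht with
      | [], ht => exact absurd (by rw [← ht]; simp) hne
      | d :: t, ht =>
        show encAux k (r u) ++ _ <+: encAux k (r v) ++ _
        rw [← ht, encAux_append, List.append_assoc]
        refine (List.prefix_append_right_inj _).mpr ?_
        have h1 : List.replicate (idx u) 0 <+: List.replicate (k-1) (0:ℕ) :=
          rep_prefix (by have := hidx_lt u; omega)
        calc List.replicate (idx u) (0:ℕ)
            <+: List.replicate (k-1) 0 := h1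
          _ <+: (List.replicate (k-1) 0 ++ [d+1] ++ encAux k t) ++ List.replicate (idx v) 0 := by
              simp only [List.append_assoc]
              exact List.prefix_append _ _
          _ = encAux k (d :: t) ++ List.replicate (idx v) 0 := by simp [encAux]
    refine ⟨pos, ?_, ?_, ?_⟩
    · intro a b h
      have hr : r a = r b := by rw [← hdec a, ← hdec b, h]
      have hlen := congrArg List.length h
      simp only [hposdef, List.length_append, List.length_replicate, encAux_length k hk,
        hr] at hlen
      have hidxeq : idx a = idx b := by omega
      have ha : a ∈ (bag (r a)).toList := Finset.mem_toList.mpr (hrS a).2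
      have hb : b ∈ (bag (r a)).toList := by rw [hr]; exact Finset.mem_toList.mpr (hrS b).2
      have hii : List.idxOf a ((bag (r a)).toList) = List.idxOf b ((bag (r a)).toList) := by
        have := hidxeq
        simp only [hidxdef] at this
        rw [this, hr]
      exact (List.idxOf_inj ha).mp hii
    · intro a
      have h1 : (r a).length < n := hht _ (hrS a).1
      have h2 : (pos a).length = k * (r a).length + idx a := by
        simp [hposdef, encAux_length k hk]
      rw [h2]
      have h3 := hidx_lt a
      calc k * (r a).length + idx a < k * ((r a).length + 1) := by
            rw [Nat.mul_add, Nat.mul_one]; omega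
        _ ≤ k * n := Nat.mul_le_mul_left k h1
        _ = n * k := Nat.mul_comm k n
    · intro u v huv
      obtain ⟨w, hwT, hu, hv⟩ := hd.edge_cover u v huv
      have h1 := hrmin u w hwT hu
      have h2 := hrmin v w hwT hv
      by_cases heq : r u = r v
      · exact hsame u v heq
      · rcases List.prefix_or_prefix_of_prefix h1 h2 with h | h
        · exact Or.inl (hstrict u v h heq)
        · exact Or.inr (hstrict v u h (Ne.symm heq))
end

section
/- For every graph G and every tree decomposition (U_v)_{v∈T} of G, there exists a strict tree decomposition (U'_v)_{v∈T'} of G whose width and height are at most those of (U_v)_{v∈T}. -/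
open scoped Classical
set_option linter.unusedSectionVars false
set_option maxHeartbeats 1000000

/-- `U_{⌈v}`: the elements appearing in some bag at or below `v` but in no bag
strictly above `v`. -/
def AboveSet {V : Type*} (T : Finset (List ℕ)) (bag : List ℕ → Finset V)
    (v : List ℕ) : Set V :=
  {a | (∃ u ∈ T, v <+: u ∧ a ∈ bag u) ∧ ∀ u ∈ T, a ∈ bag u → ¬(u <+: v ∧ u ≠ v)}

/-- A tree decomposition is strict if every bag `U_v` contains an element whose minimal
bag is `U_v`, and for every non-root node `v` the subgraph of `G` induced by `U_{⌈v}`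
is connected. -/
def IsStrict {V : Type*} (G : SimpleGraph V)
    (T : Finset (List ℕ)) (bag : List ℕ → Finset V) : Prop :=
  (∀ v ∈ T, ∃ a ∈ bag v, ∀ u ∈ T, a ∈ bag u → v <+: u) ∧
  (∀ v ∈ T, v ≠ [] → (G.induce (AboveSet T bag v)).Connected)

lemma prefix_antisymm {α : Type*} {u v : List α} (h1 : u <+: v) (h2 : v <+: u) : u = v :=
  h1.eq_of_length_le h2.length_le

lemma prefix_of_prefix_append {α : Type*} {A B y : List α} (h : y <+: A ++ B)
    (hl : y.length ≤ A.length) : y <+: A := by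
  have := h.take A.length
  simpa [List.take_append_of_le_length (le_refl A.length), List.take_of_length_le hl] using this

section Comp
variable {V : Type*} (G : SimpleGraph V)

def comp (X : Set V) (x : V) : Set V :=
  {y | ∃ (hx : x ∈ X) (hy : y ∈ X), (G.induce X).Reachable ⟨x, hx⟩ ⟨y, hy⟩}

lemma comp_subset (X : Set V) (x : V) : comp G X x ⊆ X := by
  rintro y ⟨hx, hy, -⟩; exact hy

lemma mem_comp_self {X : Set V} {x : V} (hx : x ∈ X) : x ∈ comp G X x :=
  ⟨hx, hx, SimpleGraph.Reachable.refl _⟩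

lemma comp_eq_of_mem {X : Set V} {x y : V} (h : y ∈ comp G X x) :
    comp G X y = comp G X x := by
  obtain ⟨hx, hy, hreach⟩ := h
  ext z
  constructor
  · rintro ⟨hy', hz, hr2⟩; exact ⟨hx, hz, hreach.trans hr2⟩
  · rintro ⟨hx', hz, hr2⟩; exact ⟨hy, hz, hreach.symm.trans hr2⟩

lemma adj_mem_comp {X : Set V} {x y z : V} (hy : y ∈ comp G X x) (hz : z ∈ X)
    (hadj : G.Adj y z) : z ∈ comp G X x := by
  obtain ⟨hx, hy', hr⟩ := hy
  refine ⟨hx, hz, hr.trans (SimpleGraph.Adj.reachable ?_)⟩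
  show (G.induce X).Adj ⟨y, hy'⟩ ⟨z, hz⟩
  simpa using hadj

lemma comp_walk {X : Set V} {x : V} {c d : X} (p : (G.induce X).Walk c d) :
    ∀ (hc : c.val ∈ comp G X x),
      ∃ (hd : d.val ∈ comp G X x),
        (G.induce (comp G X x)).Reachable ⟨c.val, hc⟩ ⟨d.val, hd⟩ := by
  induction p with
  | nil => exact fun hc => ⟨hc, SimpleGraph.Reachable.refl _⟩
  | @cons c m d hadj q ih =>
    intro hc
    have hadj' : G.Adj c.val m.val := by simpa using hadj
    have hm : m.val ∈ comp G X x := adj_mem_comp G hc m.2 hadj'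
    obtain ⟨hd, hr⟩ := ih hm
    refine ⟨hd, (SimpleGraph.Adj.reachable ?_).trans hr⟩
    show (G.induce (comp G X x)).Adj ⟨c.val, hc⟩ ⟨m.val, hm⟩
    simpa using hadj'

lemma comp_connected {X : Set V} {x : V} (hx : x ∈ X) :
    (G.induce (comp G X x)).Connected := by
  rw [SimpleGraph.connected_iff]
  constructor
  · rintro ⟨u, hu⟩ ⟨v, hv⟩
    obtain ⟨hx1, hu', hru⟩ := hu
    obtain ⟨hx2, hv', hrv⟩ := hv
    obtain ⟨pu⟩ := hru
    obtain ⟨pv⟩ := hrv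
    obtain ⟨hu2, hru2⟩ := comp_walk G pu (mem_comp_self G hx1)
    obtain ⟨hv2, hrv2⟩ := comp_walk G pv (mem_comp_self G hx1)
    exact hru2.symm.trans hrv2
  · exact ⟨⟨x, mem_comp_self G hx⟩⟩

end Comp

section Phase1
variable {V : Type*} (G : SimpleGraph V) (T : Finset (List ℕ)) (bag : List ℕ → Finset V)
  (e : ℕ → V) (r : V → List ℕ)

def Rset (p : List ℕ) : Set V := {a | p <+: r a}

def stp (st : List ℕ × Set V) (n : ℕ) : List ℕ × Set V :=
  (st.1 ++ [n.unpair.1],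
    comp G (st.2 ∩ Rset r (st.1 ++ [n.unpair.1])) (e n.unpair.2))

def stw (w : List ℕ) : List ℕ × Set V := w.foldl (stp G e r) ([], Set.univ)

def origv (w : List ℕ) : List ℕ := w.map (fun n => n.unpair.1)

def Sw (w : List ℕ) : Set V := (stw G e r w).2

lemma origv_length (w : List ℕ) : (origv w).length = w.length := by simp [origv]

lemma origv_append (w w' : List ℕ) : origv (w ++ w') = origv w ++ origv w' := by
  simp [origv]

lemma origv_take (w : List ℕ) (k : ℕ) : origv (w.take k) = (origv w).take k := by
  simp [origv, List.map_take]

lemma origv_prefix {w w' : List ℕ} (h : w <+: w') : origv w <+: origv w' := h.map _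

lemma stw_snoc (w : List ℕ) (n : ℕ) : stw G e r (w ++ [n]) = stp G e r (stw G e r w) n := by
  simp [stw, List.foldl_append]

lemma stw_fst (w : List ℕ) : (stw G e r w).1 = origv w := by
  induction w using List.reverseRecOn with
  | nil => simp [stw, origv]
  | append_singleton w n ih => rw [stw_snoc, stp, origv_append]; simp [ih, origv]

lemma Sw_nil : Sw G e r [] = Set.univ := rfl

lemma Sw_snoc (w : List ℕ) (n : ℕ) :
    Sw G e r (w ++ [n]) =
      comp G (Sw G e r w ∩ Rset r (origv w ++ [n.unpair.1])) (e n.unpair.2) := by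
  rw [Sw, stw_snoc, stp]
  simp [stw_fst, Sw]

lemma Sw_append_subset (w t : List ℕ) : Sw G e r (w ++ t) ⊆ Sw G e r w := by
  induction t using List.reverseRecOn with
  | nil => simp
  | append_singleton t n ih =>
    rw [← List.append_assoc, Sw_snoc]
    exact (comp_subset G _ _).trans (Set.inter_subset_left.trans ih)

lemma Sw_mono {w w' : List ℕ} (h : w <+: w') : Sw G e r w' ⊆ Sw G e r w := by
  obtain ⟨t, rfl⟩ := h
  exact Sw_append_subset G e r w t

lemma Sw_subset_R {w : List ℕ} (hw : w ≠ []) : Sw G e r w ⊆ Rset r (origv w) := by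
  rcases w.eq_nil_or_concat' with rfl | ⟨w', n, rfl⟩
  · exact absurd rfl hw
  · rw [Sw_snoc]
    refine (comp_subset G _ _).trans ?_
    rw [origv_append]
    exact Set.inter_subset_right.trans (by simp [origv])

lemma Sw_prefix_R {w' w : List ℕ} (h : w' <+: w) (hw' : w' ≠ []) :
    Sw G e r w ⊆ Rset r (origv w') :=
  (Sw_mono G e r h).trans (Sw_subset_R G e r hw')

def Valid (w : List ℕ) : Prop :=
  origv w ∈ T ∧ ∀ p n, p ++ [n] <+: w →
    (e n.unpair.2 ∈ Sw G e r (p ++ [n]) ∧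
      ∀ c < n.unpair.2, e c ∉ Sw G e r (p ++ [n]))

lemma valid_nil (hT : [] ∈ T) : Valid G T e r [] := by
  refine ⟨hT, ?_⟩
  intro p n hp
  have := hp.length_le
  simp at this

lemma valid_prefix (hpc : PrefixClosed T) {w w' : List ℕ} (h : Valid G T e r w)
    (hw' : w' <+: w) : Valid G T e r w' := by
  refine ⟨hpc _ h.1 _ (origv_prefix hw'), ?_⟩
  intro p n hp
  exact h.2 p n (hp.trans hw')

lemma prefix_snoc_cases {α : Type*} {p w : List α} {m n : α} (h : p ++ [m] <+: w ++ [n]) :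
    p ++ [m] <+: w ∨ (p = w ∧ m = n) := by
  rcases le_or_gt (p ++ [m]).length w.length with hl | hl
  · left
    exact prefix_of_prefix_append h hl
  · right
    have hle := h.length_le
    simp only [List.length_append, List.length_singleton] at hl hle
    have hlen : p.length = w.length := by omega
    have := h.eq_of_length_le (by simp [hlen])
    have h2 := List.append_inj this (by simp [hlen])
    exact ⟨h2.1, by simpa using h2.2⟩

lemma valid_snoc (hpc : PrefixClosed T) (he : Function.Surjective e) {w : List ℕ} {i : ℕ}
    (hw : Valid G T e r w) (hT : origv w ++ [i] ∈ T) {a : V}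
    (ha : a ∈ Sw G e r w ∩ Rset r (origv w ++ [i])) :
    ∃ n : ℕ, n.unpair.1 = i ∧ Valid G T e r (w ++ [n]) ∧ a ∈ Sw G e r (w ++ [n]) := by
  set X := Sw G e r w ∩ Rset r (origv w ++ [i]) with hX
  have hex : ∃ c, e c ∈ comp G X a := by
    obtain ⟨c0, hc0⟩ := he a
    exact ⟨c0, by rw [hc0]; exact mem_comp_self G ha⟩
  set c := Nat.find hex with hc
  have hcmem : e c ∈ comp G X a := Nat.find_spec hex
  have hcmin : ∀ c' < c, e c' ∉ comp G X a := fun c' hc' => Nat.find_min hex hc'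
  refine ⟨Nat.pair i c, by simp, ?_, ?_⟩
  · constructor
    · rw [origv_append]
      simpa [origv, Nat.unpair_pair] using hT
    · intro p n hp
      rcases prefix_snoc_cases hp with hp' | ⟨rfl, rfl⟩
      · exact hw.2 p n hp'
      · have hSeq : Sw G e r (p ++ [Nat.pair i c]) = comp G X a := by
          rw [Sw_snoc, Nat.unpair_pair]
          exact comp_eq_of_mem G hcmem
        rw [hSeq, Nat.unpair_pair]
        exact ⟨hcmem, hcmin⟩
  · have hSeq : Sw G e r (w ++ [Nat.pair i c]) = comp G X a := by
      rw [Sw_snoc, Nat.unpair_pair]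
      exact comp_eq_of_mem G hcmem
    rw [hSeq]
    exact mem_comp_self G ha

lemma valid_unique (hpc : PrefixClosed T) {w w' : List ℕ} (hw : Valid G T e r w) (hw' : Valid G T e r w')
    (hlen : w.length = w'.length) {a : V} (ha : a ∈ Sw G e r w) (ha' : a ∈ Sw G e r w') :
    w = w' := by
  induction w using List.reverseRecOn generalizing w' with
  | nil =>
    have : w'.length = 0 := by simpa using hlen.symm
    exact (List.length_eq_zero_iff.mp this).symm
  | append_singleton w n ih =>
    rcases w'.eq_nil_or_concat' with rfl | ⟨w'', n', rfl⟩
    · simp at hlen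
    · have hlen2 : w.length = w''.length := by
        simp only [List.length_append, List.length_singleton] at hlen; omega
      have hwv : Valid G T e r w := valid_prefix G T e r hpc hw (w.prefix_append [n])
      have hw''v : Valid G T e r w'' := valid_prefix G T e r hpc hw' (w''.prefix_append [n'])
      obtain rfl : w = w'' := ih hwv hw''v hlen2 (Sw_mono G e r (w.prefix_append [n]) ha)
        (Sw_mono G e r (w''.prefix_append [n']) ha')
      have hRa : origv w ++ [n.unpair.1] <+: r a := by
        have h1 := Sw_subset_R G e r (by simp : w ++ [n] ≠ []) ha
        rwa [origv_append, show origv [n] = [n.unpair.1] from rfl] at h1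
      have hRa' : origv w ++ [n'.unpair.1] <+: r a := by
        have h1 := Sw_subset_R G e r (by simp : w ++ [n'] ≠ []) ha'
        rwa [origv_append, show origv [n'] = [n'.unpair.1] from rfl] at h1
      have hi : n.unpair.1 = n'.unpair.1 := by
        have hcmp := List.prefix_or_prefix_of_prefix hRa hRa'
        have heq : origv w ++ [n.unpair.1] = origv w ++ [n'.unpair.1] := by
          rcases hcmp with hcl | hcl
          · exact hcl.eq_of_length_le (by simp)
          · exact (hcl.eq_of_length_le (by simp)).symm
        simpa using heq
      set X := Sw G e r w ∩ Rset r (origv w ++ [n.unpair.1]) with hXdef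
      have hS1 : Sw G e r (w ++ [n]) = comp G X (e n.unpair.2) := Sw_snoc G e r w n
      have hS2 : Sw G e r (w ++ [n']) = comp G X (e n'.unpair.2) := by
        rw [Sw_snoc, ← hi]
      obtain ⟨hc1, hc1min⟩ := hw.2 w n (List.prefix_refl _)
      obtain ⟨hc2, hc2min⟩ := hw'.2 w n' (List.prefix_refl _)
      have e1 : comp G X a = comp G X (e n.unpair.2) := comp_eq_of_mem G (hS1 ▸ ha)
      have e2 : comp G X a = comp G X (e n'.unpair.2) := comp_eq_of_mem G (hS2 ▸ ha')
      have hSeq : Sw G e r (w ++ [n]) = Sw G e r (w ++ [n']) := by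
        rw [hS1, hS2, ← e1, ← e2]
      have hc : n.unpair.2 = n'.unpair.2 := by
        rcases Nat.lt_trichotomy n.unpair.2 n'.unpair.2 with h | h | h
        · exact absurd (hSeq ▸ hc1) (hc2min _ h)
        · exact h
        · exact absurd (hSeq.symm ▸ hc2) (hc1min _ h)
      have : n = n' := by
        rw [← Nat.pair_unpair n, ← Nat.pair_unpair n', hi, hc]
      rw [this]
end Phase1


lemma phase1 {V : Type*} (G : SimpleGraph V) [Nonempty V] [Finite V]
    (T : Finset (List ℕ)) (bag : List ℕ → Finset V)
    (htd : IsTreeDecomp G T bag)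
    (e : ℕ → V) (he : Function.Surjective e)
    (r : V → List ℕ)
    (hrT : ∀ a, r a ∈ T) (hrbag : ∀ a, a ∈ bag (r a))
    (hrmin : ∀ a, ∀ v ∈ T, a ∈ bag v → r a <+: v)
    (hrbtw : ∀ a, ∀ v ∈ T, a ∈ bag v → ∀ u, r a <+: u → u <+: v → u ∈ T ∧ a ∈ bag u) :
    ∃ (T₁ : Finset (List ℕ)) (bag₁ : List ℕ → Finset V) (r₁ : V → List ℕ),
      IsTreeDecomp G T₁ bag₁ ∧
      (∀ a, r₁ a ∈ T₁ ∧ a ∈ bag₁ (r₁ a)) ∧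
      (∀ a, ∀ v ∈ T₁, a ∈ bag₁ v → r₁ a <+: v) ∧
      (∀ a, ∀ v ∈ T₁, a ∈ bag₁ v → ∀ u, r₁ a <+: u → u <+: v → u ∈ T₁ ∧ a ∈ bag₁ u) ∧
      (∀ v ∈ T₁, v ≠ [] → (G.induce {a | v <+: r₁ a}).Connected) ∧
      (∀ w ∈ T₁, ∃ v ∈ T, w.length = v.length ∧ bag₁ w ⊆ bag v) := by
  classical
  have hpc := htd.prefix_closed
  have hTnil : [] ∈ T := hpc _ (hrT (Classical.arbitrary V)) [] List.nil_prefix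
  -- canonical chains
  have hcanon : ∀ (a : V) (p : List ℕ), p <+: r a →
      ∃ w, Valid G T e r w ∧ origv w = p ∧ a ∈ Sw G e r w := by
    intro a p
    induction p using List.reverseRecOn with
    | nil => exact fun _ => ⟨[], valid_nil G T e r hTnil, rfl, Set.mem_univ a⟩
    | append_singleton p i ih =>
      intro hp
      obtain ⟨w, hw, how, haw⟩ := ih ((p.prefix_append [i]).trans hp)
      have hT' : origv w ++ [i] ∈ T := by rw [how]; exact hpc _ (hrT a) _ hp
      have haX : a ∈ Sw G e r w ∩ Rset r (origv w ++ [i]) := ⟨haw, by rw [how]; exact hp⟩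
      obtain ⟨n, hn1, hn2, hn3⟩ := valid_snoc G T e r hpc he hw hT' haX
      refine ⟨w ++ [n], hn2, ?_, hn3⟩
      rw [origv_append, how, show origv [n] = [n.unpair.1] from rfl, hn1]
  have H : ∀ a : V, ∃ w, Valid G T e r w ∧ origv w = r a ∧ a ∈ Sw G e r w :=
    fun a => hcanon a (r a) (List.prefix_refl _)
  choose cw hcw1 hcw2 hcw3 using H
  have hcwlen : ∀ a, (cw a).length = (r a).length := fun a => by
    rw [← hcw2 a, origv_length]
  -- finiteness
  have hlenbd : ∀ w, Valid G T e r w → w.length ≤ T.sup List.length := by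
    intro w hw
    have := Finset.le_sup (f := List.length) hw.1
    rwa [origv_length] at this
  have hfin : {w | Valid G T e r w}.Finite := by
    have hsub : {w | Valid G T e r w} ⊆
        ⋃ k ∈ Set.Iic (T.sup List.length), {w | Valid G T e r w ∧ w.length = k} := by
      intro w hw
      simp only [Set.mem_iUnion, Set.mem_setOf_eq, Set.mem_Iic]
      exact ⟨w.length, hlenbd w hw, hw, rfl⟩
    refine Set.Finite.subset (Set.Finite.biUnion (Set.finite_Iic _) (fun k _ => ?_)) hsub
    refine Set.Finite.of_finite_image (f := Sw G e r) (Set.toFinite _) ?_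
    rintro w ⟨hw, hlw⟩ w' ⟨hw', hlw'⟩ heq
    have hlen : w.length = w'.length := hlw.trans hlw'.symm
    rcases w.eq_nil_or_concat' with rfl | ⟨p, n, rfl⟩
    · have : w'.length = 0 := by simpa using hlen.symm
      exact (List.length_eq_zero_iff.mp this).symm
    · have hc : e n.unpair.2 ∈ Sw G e r (p ++ [n]) := (hw.2 p n (List.prefix_refl _)).1
      have hc' : e n.unpair.2 ∈ Sw G e r w' := by rw [← heq]; exact hc
      exact valid_unique G T e r hpc hw hw' hlen hc hc'
  set T₁ : Finset (List ℕ) := hfin.toFinset with hT₁def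
  have hmemT₁ : ∀ w, w ∈ T₁ ↔ Valid G T e r w := by
    intro w; rw [hT₁def, Set.Finite.mem_toFinset]; rfl
  set bag₁ : List ℕ → Finset V :=
    fun w => (bag (origv w)).filter (fun a => a ∈ Sw G e r (w.take (r a).length)) with hbag₁def
  have htake_of_prefix : ∀ {p u : List ℕ}, p <+: u → u.take p.length = p :=
    fun h => (List.prefix_iff_eq_take.mp h).symm
  -- membership characterization
  have hchar : ∀ (a : V) (w : List ℕ), Valid G T e r w →
      (a ∈ bag₁ w ↔ a ∈ bag (origv w) ∧ w.take (r a).length = cw a) := by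
    intro a w hw
    rw [hbag₁def]
    simp only [Finset.mem_filter]
    constructor
    · rintro ⟨h1, h2⟩
      refine ⟨h1, ?_⟩
      have hpref : r a <+: origv w := hrmin a _ hw.1 h1
      have hlen : (r a).length ≤ w.length := by
        have := hpref.length_le; rwa [origv_length] at this
      refine valid_unique G T e r hpc
        (valid_prefix G T e r hpc hw (List.take_prefix _ _)) (hcw1 a) ?_ h2 (hcw3 a)
      rw [List.length_take, hcwlen]
      omega
    · rintro ⟨h1, h2⟩
      exact ⟨h1, by rw [h2]; exact hcw3 a⟩
  -- root properties
  have hr1 : ∀ a : V, cw a ∈ T₁ ∧ a ∈ bag₁ (cw a) := by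
    intro a
    refine ⟨(hmemT₁ _).mpr (hcw1 a), (hchar a (cw a) (hcw1 a)).mpr ⟨?_, ?_⟩⟩
    · rw [hcw2 a]; exact hrbag a
    · rw [← hcwlen a, List.take_length]
  have hmin₁ : ∀ a : V, ∀ w ∈ T₁, a ∈ bag₁ w → cw a <+: w := by
    intro a w hwT haw
    obtain ⟨-, h2⟩ := (hchar a w ((hmemT₁ w).mp hwT)).mp haw
    rw [← h2]
    exact List.take_prefix _ _
  have hbtw₁ : ∀ a : V, ∀ w ∈ T₁, a ∈ bag₁ w →
      ∀ u, cw a <+: u → u <+: w → u ∈ T₁ ∧ a ∈ bag₁ u := by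
    intro a w hwT haw u h1 h2
    have hw := (hmemT₁ w).mp hwT
    have hu : Valid G T e r u := valid_prefix G T e r hpc hw h2
    obtain ⟨hbagw, htake⟩ := (hchar a w hw).mp haw
    have hra : r a <+: origv u := by rw [← hcw2 a]; exact origv_prefix h1
    have hbagu : a ∈ bag (origv u) :=
      (hrbtw a (origv w) hw.1 hbagw (origv u) hra (origv_prefix h2)).2
    refine ⟨(hmemT₁ u).mpr hu, (hchar a u hu).mpr ⟨hbagu, ?_⟩⟩
    rw [← hcwlen a]
    exact htake_of_prefix h1
  -- key adjacency propagation
  have hadjS : ∀ a b : V, G.Adj a b → r b <+: r a →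
      ∀ k, k ≤ (r b).length → b ∈ Sw G e r ((cw a).take k) := by
    intro a b hab hba k
    induction k with
    | zero => intro _; rw [List.take_zero]; exact Set.mem_univ b
    | succ k ih =>
      intro hk
      have hlba : (r b).length ≤ (r a).length := hba.length_le
      have hk' : k < (cw a).length := by rw [hcwlen]; omega
      have hstep : (cw a).take k ++ [(cw a)[k]] = (cw a).take (k+1) :=
        List.take_concat_get' _ _ hk'
      set n := (cw a)[k] with hndef
      have hbk : b ∈ Sw G e r ((cw a).take k) := ih (by omega)
      have haS : a ∈ Sw G e r ((cw a).take (k+1)) :=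
        Sw_mono G e r (List.take_prefix _ _) (hcw3 a)
      rw [← hstep] at haS ⊢
      rw [Sw_snoc] at haS ⊢
      refine adj_mem_comp G haS ⟨hbk, ?_⟩ hab
      show origv ((cw a).take k) ++ [n.unpair.1] <+: r b
      have heq1 : origv ((cw a).take k) ++ [n.unpair.1] = (r a).take (k+1) := by
        have h3 := congrArg origv hstep
        rw [origv_append, show origv [n] = [n.unpair.1] from rfl] at h3
        rw [h3, origv_take, hcw2]
      rw [heq1]
      have heq2 : (r a).take (k+1) = (r b).take (k+1) := by
        refine ((hba.take (k+1)).eq_of_length_le ?_).symm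
        simp only [List.length_take]
        omega
      rw [heq2]
      exact List.take_prefix _ _
  -- edge cover via roots
  have hcover : ∀ a b : V, G.Adj a b → r b <+: r a →
      ∃ w ∈ T₁, a ∈ bag₁ w ∧ b ∈ bag₁ w := by
    intro a b hab hba
    refine ⟨cw a, (hr1 a).1, (hr1 a).2, ?_⟩
    refine (hchar b (cw a) (hcw1 a)).mpr ⟨?_, ?_⟩
    · obtain ⟨v, hv, hav, hbv⟩ := htd.edge_cover a b hab
      rw [hcw2 a]
      exact (hrbtw b v hv hbv (r a) hba (hrmin a v hv hav)).2
    · have hb : b ∈ Sw G e r ((cw a).take (r b).length) :=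
        hadjS a b hab hba _ le_rfl
      refine valid_unique G T e r hpc
        (valid_prefix G T e r hpc (hcw1 a) (List.take_prefix _ _)) (hcw1 b) ?_ hb (hcw3 b)
      rw [List.length_take, hcwlen a, hcwlen b]
      have := hba.length_le
      omega
  -- Sw is the set of vertices rooted at/below w
  have hScup : ∀ w : List ℕ, Valid G T e r w → {a : V | w <+: cw a} = Sw G e r w := by
    intro w hw
    ext a
    simp only [Set.mem_setOf_eq]
    constructor
    · intro h
      exact Sw_mono G e r h (hcw3 a)
    · intro ha
      rcases eq_or_ne w [] with rfl | hwne
      · exact (cw a).nil_prefix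
      · have hor : origv w <+: r a := Sw_prefix_R G e r (List.prefix_refl w) hwne ha
        have hlen : w.length ≤ (cw a).length := by
          rw [hcwlen]
          have := hor.length_le
          rwa [origv_length] at this
        have heq : (cw a).take w.length = w := by
          refine valid_unique G T e r hpc
            (valid_prefix G T e r hpc (hcw1 a) (List.take_prefix _ _)) hw ?_
            (Sw_mono G e r (List.take_prefix _ _) (hcw3 a)) ha
          rw [List.length_take]
          omega
        rw [← heq]
        exact List.take_prefix _ _
  have hconn₁ : ∀ w ∈ T₁, w ≠ [] → (G.induce {a : V | w <+: cw a}).Connected := by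
    intro w hwT hwne
    have hw := (hmemT₁ w).mp hwT
    rw [hScup w hw]
    rcases w.eq_nil_or_concat' with rfl | ⟨p, n, rfl⟩
    · exact absurd rfl hwne
    · have hc : e n.unpair.2 ∈ Sw G e r (p ++ [n]) := (hw.2 p n (List.prefix_refl _)).1
      rw [Sw_snoc] at hc ⊢
      exact comp_connected G (comp_subset G _ _ hc)
  -- tree decomposition
  have htd₁ : IsTreeDecomp G T₁ bag₁ := by
    constructor
    · intro x hx y hy
      exact (hmemT₁ y).mpr (valid_prefix G T e r hpc ((hmemT₁ x).mp hx) hy)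
    · intro a
      refine ⟨cw a, ⟨(hr1 a).1, (hr1 a).2⟩, ?_⟩
      rintro w ⟨hwT, haw⟩
      refine ⟨hmin₁ a w hwT haw, ?_⟩
      intro u h1 h2
      exact hbtw₁ a w hwT haw u h1 h2
    · intro a b hab
      obtain ⟨v, hv, hav, hbv⟩ := htd.edge_cover a b hab
      rcases List.prefix_or_prefix_of_prefix (hrmin b v hv hbv) (hrmin a v hv hav) with h | h
      · exact hcover a b hab h
      · obtain ⟨w, hw, hbw, haw⟩ := hcover b a hab.symm h
        exact ⟨w, hw, haw, hbw⟩
  refine ⟨T₁, bag₁, cw, htd₁, hr1, hmin₁, hbtw₁, hconn₁, ?_⟩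
  intro w hwT
  refine ⟨origv w, ((hmemT₁ w).mp hwT).1, (origv_length w).symm, ?_⟩
  rw [hbag₁def]
  exact Finset.filter_subset _ _


section Phase2
variable {V : Type*} (T₁ : Finset (List ℕ)) (r₁ : V → List ℕ)

noncomputable def Ret : Finset (List ℕ) := T₁.filter (fun v => ∃ a, r₁ a = v)

noncomputable def rzero : List ℕ :=
  if h : (Ret T₁ r₁).Nonempty then
    (Finset.exists_min_image (Ret T₁ r₁) List.length h).choose
  else []

def PC (v : List ℕ) : List (List ℕ) := (List.range (v.length+1)).map v.take

noncomputable def keep (p : List ℕ) : Bool := decide (p ∈ Ret T₁ r₁ ∧ p ≠ rzero T₁ r₁)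

noncomputable def psi (v : List ℕ) : List ℕ :=
  ((PC v).filter (keep T₁ r₁)).map Encodable.encode

lemma keep_iff (p : List ℕ) : keep T₁ r₁ p = true ↔ (p ∈ Ret T₁ r₁ ∧ p ≠ rzero T₁ r₁) := by
  simp [keep]

lemma mem_PC {p v : List ℕ} : p ∈ PC v ↔ p <+: v := by
  constructor
  · rintro hp
    simp only [PC, List.mem_map, List.mem_range] at hp
    obtain ⟨k, _, rfl⟩ := hp
    exact List.take_prefix k v
  · intro hp
    simp only [PC, List.mem_map, List.mem_range]
    exact ⟨p.length, by have := hp.length_le; omega, (List.prefix_iff_eq_take.mp hp).symm⟩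

lemma PC_mono {v v' : List ℕ} (h : v <+: v') : PC v <+: PC v' := by
  have hlen : v.length ≤ v'.length := h.length_le
  have : PC v = (PC v').take (v.length + 1) := by
    simp only [PC, ← List.map_take, List.take_range]
    have hmin : min (v.length + 1) (v'.length + 1) = v.length + 1 := by omega
    rw [hmin]
    apply List.map_congr_left
    intro k hk
    simp only [List.mem_range] at hk
    have h1 : v.take k <+: v'.take k := h.take k
    exact h1.eq_of_length_le (by simp; omega)
  rw [this]; exact List.take_prefix _ _

lemma PC_snoc (w : List ℕ) (x : ℕ) : PC (w ++ [x]) = PC w ++ [w ++ [x]] := by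
  simp only [PC, List.length_append, List.length_singleton]
  rw [show w.length + 1 + 1 = (w.length + 1) + 1 from rfl, List.range_succ, List.map_append]
  congr 1
  · apply List.map_congr_left
    intro k hk
    simp only [List.mem_range] at hk
    rw [List.take_append_of_le_length (by omega)]
  · simp

lemma psi_mono {v v' : List ℕ} (h : v <+: v') : psi T₁ r₁ v <+: psi T₁ r₁ v' :=
  ((PC_mono h).filter _).map _

variable (hne : (Ret T₁ r₁).Nonempty)
include hne

lemma rzero_mem : rzero T₁ r₁ ∈ Ret T₁ r₁ := by
  rw [rzero, dif_pos hne]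
  exact (Finset.exists_min_image (Ret T₁ r₁) List.length hne).choose_spec.1

lemma rzero_min : ∀ v ∈ Ret T₁ r₁, (rzero T₁ r₁).length ≤ v.length := by
  rw [rzero]
  intro v hv
  rw [dif_pos hne]
  exact (Finset.exists_min_image (Ret T₁ r₁) List.length hne).choose_spec.2 v hv

lemma keep_of_prefix_rzero {p : List ℕ} (hp : p <+: rzero T₁ r₁) :
    keep T₁ r₁ p = false := by
  rw [Bool.eq_false_iff]
  intro hk
  rw [keep_iff] at hk
  have := rzero_min T₁ r₁ hne p hk.1
  exact hk.2 (hp.eq_of_length_le this)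

lemma psi_rzero : psi T₁ r₁ (rzero T₁ r₁) = [] := by
  rw [psi, List.map_eq_nil_iff, List.filter_eq_nil_iff]
  intro p hp
  rw [mem_PC] at hp
  simp [keep_of_prefix_rzero T₁ r₁ hne hp]

lemma encode_mem_psi {v : List ℕ} (hv : v ∈ Ret T₁ r₁) (hvr : v ≠ rzero T₁ r₁) :
    Encodable.encode v ∈ psi T₁ r₁ v := by
  rw [psi, List.mem_map]
  exact ⟨v, List.mem_filter.mpr ⟨mem_PC.mpr (List.prefix_refl v), (keep_iff T₁ r₁ v).mpr ⟨hv, hvr⟩⟩, rfl⟩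

omit hne

lemma mem_psi_elim {x : ℕ} {v : List ℕ} (hx : x ∈ psi T₁ r₁ v) :
    ∃ p, p <+: v ∧ p ∈ Ret T₁ r₁ ∧ p ≠ rzero T₁ r₁ ∧ x = Encodable.encode p := by
  rw [psi, List.mem_map] at hx
  obtain ⟨p, hp, rfl⟩ := hx
  rw [List.mem_filter, mem_PC, keep_iff] at hp
  exact ⟨p, hp.1, hp.2.1, hp.2.2, rfl⟩

include hne

lemma psi_eq_nil_iff {v : List ℕ} (hv : v ∈ Ret T₁ r₁) :
    psi T₁ r₁ v = [] ↔ v = rzero T₁ r₁ := by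
  constructor
  · intro h
    by_contra hvr
    have := encode_mem_psi T₁ r₁ hne hv hvr
    rw [h] at this; simp at this
  · rintro rfl; exact psi_rzero T₁ r₁ hne

lemma psi_inj {v v' : List ℕ} (hv : v ∈ Ret T₁ r₁) (hv' : v' ∈ Ret T₁ r₁)
    (h : psi T₁ r₁ v = psi T₁ r₁ v') : v = v' := by
  by_cases hvr : v = rzero T₁ r₁
  · subst hvr
    rw [psi_rzero T₁ r₁ hne] at h
    exact ((psi_eq_nil_iff T₁ r₁ hne hv').mp h.symm).symm
  by_cases hvr' : v' = rzero T₁ r₁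
  · subst hvr'
    rw [psi_rzero T₁ r₁ hne] at h
    exact (psi_eq_nil_iff T₁ r₁ hne hv).mp h
  · have h1 : Encodable.encode v ∈ psi T₁ r₁ v' := h ▸ encode_mem_psi T₁ r₁ hne hv hvr
    have h2 : Encodable.encode v' ∈ psi T₁ r₁ v := h ▸ encode_mem_psi T₁ r₁ hne hv' hvr'
    obtain ⟨p, hpv, _, _, hpe⟩ := mem_psi_elim T₁ r₁ h1
    obtain ⟨q, hqv, _, _, hqe⟩ := mem_psi_elim T₁ r₁ h2
    have hp : v = p := Encodable.encode_injective hpe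
    have hq : v' = q := Encodable.encode_injective hqe
    exact prefix_antisymm (hp ▸ hpv) (hq ▸ hqv)

lemma psi_prefix_rev {v v' : List ℕ} (hvr : v ≠ rzero T₁ r₁) (hv : v ∈ Ret T₁ r₁)
    (h : psi T₁ r₁ v <+: psi T₁ r₁ v') : v <+: v' := by
  have h1 : Encodable.encode v ∈ psi T₁ r₁ v' :=
    h.subset (encode_mem_psi T₁ r₁ hne hv hvr)
  obtain ⟨p, hpv, _, _, hpe⟩ := mem_psi_elim T₁ r₁ h1
  exact (Encodable.encode_injective hpe : v = p) ▸ hpv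

lemma filter_PC_prefix_char {v : List ℕ} :
    ∀ y, y <+: (PC v).filter (keep T₁ r₁) →
      y = [] ∨ ∃ u, u ∈ Ret T₁ r₁ ∧ u ≠ rzero T₁ r₁ ∧ u <+: v ∧
        (PC u).filter (keep T₁ r₁) = y := by
  induction v using List.reverseRecOn with
  | nil =>
    intro y hy
    left
    have h0 : (PC ([] : List ℕ)).filter (keep T₁ r₁) = [] := by
      rw [List.filter_eq_nil_iff]
      intro p hp
      rw [mem_PC, List.prefix_nil] at hp
      subst hp
      simp [keep_of_prefix_rzero T₁ r₁ hne ((rzero T₁ r₁).nil_prefix)]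
    rw [h0, List.prefix_nil] at hy
    exact hy
  | append_singleton w x ih =>
    intro y hy
    rw [PC_snoc, List.filter_append] at hy
    by_cases hk : keep T₁ r₁ (w ++ [x]) = true
    · simp only [List.filter_singleton, hk, cond_true] at hy
      rcases eq_or_lt_of_le hy.length_le with heq | hlt
      · right
        refine ⟨w ++ [x], ((keep_iff T₁ r₁ _).mp hk).1, ((keep_iff T₁ r₁ _).mp hk).2,
          List.prefix_refl _, ?_⟩
        rw [PC_snoc, List.filter_append]
        simp only [List.filter_singleton, hk, cond_true]
        exact (hy.eq_of_length_le (le_of_eq heq.symm)).symm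
      · have hy' : y <+: (PC w).filter (keep T₁ r₁) := by
          apply prefix_of_prefix_append hy
          simp only [List.length_append, List.length_singleton] at hlt ⊢
          omega
        rcases ih y hy' with h | ⟨u, h1, h2, h3, h4⟩
        · exact Or.inl h
        · exact Or.inr ⟨u, h1, h2, h3.trans (w.prefix_append [x]), h4⟩
    · rw [Bool.not_eq_true] at hk
      simp only [List.filter_singleton, hk, cond_false, List.append_nil] at hy
      rcases ih y hy with h | ⟨u, h1, h2, h3, h4⟩
      · exact Or.inl h
      · exact Or.inr ⟨u, h1, h2, h3.trans (w.prefix_append [x]), h4⟩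

lemma psi_prefix_char {v : List ℕ} {y : List ℕ} (hy : y <+: psi T₁ r₁ v) :
    y = [] ∨ ∃ u, u ∈ Ret T₁ r₁ ∧ u ≠ rzero T₁ r₁ ∧ u <+: v ∧ psi T₁ r₁ u = y := by
  rw [psi] at hy
  have : y = ((((PC v).filter (keep T₁ r₁)).take y.length).map Encodable.encode) := by
    rw [List.map_take]
    exact List.prefix_iff_eq_take.mp hy
  rcases filter_PC_prefix_char T₁ r₁ hne (((PC v).filter (keep T₁ r₁)).take y.length)
      (List.take_prefix _ _) with h | ⟨u, h1, h2, h3, h4⟩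
  · left; rw [this, h]; rfl
  · right
    exact ⟨u, h1, h2, h3, by rw [psi, h4, ← this]⟩

end Phase2


lemma phase2 {V : Type*} (G : SimpleGraph V) [Nonempty V]
    (T₁ : Finset (List ℕ)) (bag₁ : List ℕ → Finset V) (r₁ : V → List ℕ)
    (htd : IsTreeDecomp G T₁ bag₁)
    (hmem : ∀ a, r₁ a ∈ T₁ ∧ a ∈ bag₁ (r₁ a))
    (hmin : ∀ a, ∀ v ∈ T₁, a ∈ bag₁ v → r₁ a <+: v)
    (hbtw : ∀ a, ∀ v ∈ T₁, a ∈ bag₁ v → ∀ u, r₁ a <+: u → u <+: v → u ∈ T₁ ∧ a ∈ bag₁ u)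
    (hconn : ∀ v ∈ T₁, v ≠ [] → (G.induce {a | v <+: r₁ a}).Connected) :
    ∃ (T₂ : Finset (List ℕ)) (bag₂ : List ℕ → Finset V),
      IsTreeDecomp G T₂ bag₂ ∧ IsStrict G T₂ bag₂ ∧
      (∀ y ∈ T₂, ∃ v ∈ T₁, y.length ≤ v.length ∧ bag₂ y = bag₁ v) := by
  classical
  have hRet : ∀ v, v ∈ Ret T₁ r₁ ↔ (v ∈ T₁ ∧ ∃ a, r₁ a = v) := by
    intro v; simp [Ret]
  have hra : ∀ a : V, r₁ a ∈ Ret T₁ r₁ := fun a => (hRet _).mpr ⟨(hmem a).1, a, rfl⟩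
  have hne : (Ret T₁ r₁).Nonempty := ⟨r₁ (Classical.arbitrary V), hra _⟩
  have hRetT : ∀ v ∈ Ret T₁ r₁, v ∈ T₁ := fun v hv => ((hRet v).mp hv).1
  set T₂ : Finset (List ℕ) := (Ret T₁ r₁).image (psi T₁ r₁) with hT₂
  set bag₂ : List ℕ → Finset V := fun y =>
    if h : ∃ v ∈ Ret T₁ r₁, psi T₁ r₁ v = y then bag₁ h.choose else ∅ with hbag₂
  have bag₂_psi : ∀ v ∈ Ret T₁ r₁, bag₂ (psi T₁ r₁ v) = bag₁ v := by
    intro v hv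
    have hex : ∃ u ∈ Ret T₁ r₁, psi T₁ r₁ u = psi T₁ r₁ v := ⟨v, hv, rfl⟩
    rw [hbag₂]
    simp only [dif_pos hex]
    congr 1
    exact psi_inj T₁ r₁ hne hex.choose_spec.1 hv hex.choose_spec.2
  have memT₂ : ∀ y, y ∈ T₂ ↔ ∃ v ∈ Ret T₁ r₁, psi T₁ r₁ v = y := by
    intro y; simp [hT₂]
  have memS : ∀ (a : V) (y : List ℕ), (y ∈ T₂ ∧ a ∈ bag₂ y) ↔
      ∃ v ∈ Ret T₁ r₁, psi T₁ r₁ v = y ∧ a ∈ bag₁ v := by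
    intro a y
    constructor
    · rintro ⟨hyT, hay⟩
      obtain ⟨v, hv, rfl⟩ := (memT₂ y).mp hyT
      exact ⟨v, hv, rfl, by rwa [bag₂_psi v hv] at hay⟩
    · rintro ⟨v, hv, rfl, hav⟩
      exact ⟨(memT₂ _).mpr ⟨v, hv, rfl⟩, by rwa [bag₂_psi v hv]⟩
  -- length bound
  have psi_len : ∀ v : List ℕ, (psi T₁ r₁ v).length ≤ v.length := by
    intro v
    have hPC : PC v = [] :: (List.range v.length).map (fun k => v.take (k+1)) := by
      rw [PC, List.range_succ_eq_map]
      simp [List.map_map, Function.comp_def]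
    rw [psi, List.length_map, hPC, List.filter_cons]
    have hk0 : keep T₁ r₁ [] = false := keep_of_prefix_rzero T₁ r₁ hne (List.nil_prefix)
    simp only [hk0, Bool.false_eq_true, if_false]
    calc (((List.range v.length).map (fun k => v.take (k+1))).filter (keep T₁ r₁)).length
        ≤ ((List.range v.length).map (fun k => v.take (k+1))).length :=
          List.length_filter_le _ _
      _ = v.length := by simp
  -- the tree decomposition
  have htd₂ : IsTreeDecomp G T₂ bag₂ := by
    constructor
    · -- prefix_closed
      intro x hx y hy
      obtain ⟨v, hv, rfl⟩ := (memT₂ x).mp hx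
      rcases psi_prefix_char T₁ r₁ hne hy with rfl | ⟨u, hu, _, _, rfl⟩
      · exact (memT₂ _).mpr ⟨rzero T₁ r₁, rzero_mem T₁ r₁ hne, psi_rzero T₁ r₁ hne⟩
      · exact (memT₂ _).mpr ⟨u, hu, rfl⟩
    · -- vertex_conn
      intro a
      refine ⟨psi T₁ r₁ (r₁ a), ?_, ?_⟩
      · exact (memS a _).mpr ⟨r₁ a, hra a, rfl, (hmem a).2⟩
      · intro y hy
        obtain ⟨v, hv, rfl, hav⟩ := (memS a y).mp hy
        have hrv : r₁ a <+: v := hmin a v (hRetT v hv) hav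
        refine ⟨psi_mono T₁ r₁ hrv, ?_⟩
        intro u' hu1 hu2
        rcases psi_prefix_char T₁ r₁ hne hu2 with rfl | ⟨u, hu, hur, huv, rfl⟩
        · have h0 : psi T₁ r₁ (r₁ a) = [] := List.prefix_nil.mp hu1
          have : r₁ a = rzero T₁ r₁ := (psi_eq_nil_iff T₁ r₁ hne (hra a)).mp h0
          refine (memS a _).mpr ⟨r₁ a, hra a, h0, (hmem a).2⟩
        · have hru : r₁ a <+: u := by
            by_cases hrz : r₁ a = rzero T₁ r₁
            · rcases List.prefix_or_prefix_of_prefix (hmin a v (hRetT v hv) hav) huv with h | h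
              · exact h
              · -- u <+: r₁ a = rzero, u ∈ Ret, u ≠ rzero : contradiction
                exfalso
                have hlen := rzero_min T₁ r₁ hne u hu
                rw [← hrz] at hlen
                exact hur (by rw [← hrz]; exact h.eq_of_length_le hlen)
            · exact psi_prefix_rev T₁ r₁ hne hrz (hra a) hu1
          obtain ⟨huT, hau⟩ := hbtw a v (hRetT v hv) hav u hru huv
          exact (memS a _).mpr ⟨u, hu, rfl, hau⟩
    · -- edge_cover
      have key : ∀ a b : V, G.Adj a b → r₁ b <+: r₁ a →
          ∃ v ∈ T₂, a ∈ bag₂ v ∧ b ∈ bag₂ v := by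
        intro a b hab hr
        obtain ⟨w, hw, haw, hbw⟩ := htd.edge_cover a b hab
        obtain ⟨_, hbra⟩ := hbtw b w hw hbw (r₁ a) hr (hmin a w hw haw)
        refine ⟨psi T₁ r₁ (r₁ a), (memT₂ _).mpr ⟨r₁ a, hra a, rfl⟩, ?_, ?_⟩
        · rw [bag₂_psi _ (hra a)]; exact (hmem a).2
        · rw [bag₂_psi _ (hra a)]; exact hbra
      intro a b hab
      obtain ⟨w, hw, haw, hbw⟩ := htd.edge_cover a b hab
      rcases List.prefix_or_prefix_of_prefix (hmin b w hw hbw) (hmin a w hw haw) with h | h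
      · exact key a b hab h
      · obtain ⟨v, hv, hbv, hav⟩ := key b a hab.symm h
        exact ⟨v, hv, hav, hbv⟩
  refine ⟨T₂, bag₂, htd₂, ⟨?_, ?_⟩, ?_⟩
  · -- strictness (1)
    intro y hy
    obtain ⟨v, hv, rfl⟩ := (memT₂ y).mp hy
    obtain ⟨_, a, rfl⟩ := (hRet v).mp hv
    refine ⟨a, by rw [bag₂_psi _ hv]; exact (hmem a).2, ?_⟩
    intro u' hu'T hau'
    obtain ⟨u, hu, rfl, hau⟩ := (memS a u').mp ⟨hu'T, hau'⟩
    exact psi_mono T₁ r₁ (hmin a u (hRetT u hu) hau)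
  · -- strictness (2)
    intro y hy hyne
    obtain ⟨v, hv, rfl⟩ := (memT₂ y).mp hy
    have hvrz : v ≠ rzero T₁ r₁ := fun hh => hyne ((psi_eq_nil_iff T₁ r₁ hne hv).mpr hh)
    have hvne : v ≠ [] := by
      intro hh
      apply hvrz
      have := rzero_min T₁ r₁ hne v hv
      have h2 : (rzero T₁ r₁).length = 0 := by rw [hh] at this; simpa using this
      rw [hh, ← List.length_eq_zero_iff.mp h2]
    have habove : AboveSet T₂ bag₂ (psi T₁ r₁ v) = {a | v <+: r₁ a} := by
      ext a
      constructor
      · rintro ⟨⟨u', hu'T, hpre, hau'⟩, hnone⟩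
        obtain ⟨u, hu, rfl, hau⟩ := (memS a u').mp ⟨hu'T, hau'⟩
        have hvu : v <+: u := psi_prefix_rev T₁ r₁ hne hvrz hv hpre
        have hru : r₁ a <+: u := hmin a u (hRetT u hu) hau
        rcases List.prefix_or_prefix_of_prefix hvu hru with h | h
        · exact h
        · -- r₁ a <+: v
          by_cases heq : r₁ a = v
          · exact heq ▸ List.prefix_refl v
          exfalso
          apply hnone (psi T₁ r₁ (r₁ a)) ((memT₂ _).mpr ⟨r₁ a, hra a, rfl⟩)
            (by rw [bag₂_psi _ (hra a)]; exact (hmem a).2)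
          refine ⟨psi_mono T₁ r₁ h, ?_⟩
          intro hcontra
          exact heq (psi_inj T₁ r₁ hne (hra a) hv hcontra)
      · intro ha
        refine ⟨⟨psi T₁ r₁ (r₁ a), (memT₂ _).mpr ⟨r₁ a, hra a, rfl⟩, psi_mono T₁ r₁ ha,
          by rw [bag₂_psi _ (hra a)]; exact (hmem a).2⟩, ?_⟩
        rintro u' hu'T hau' ⟨hpre, hneq⟩
        obtain ⟨u, hu, rfl, hau⟩ := (memS a u').mp ⟨hu'T, hau'⟩
        have hru : r₁ a <+: u := hmin a u (hRetT u hu) hau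
        by_cases hurz : u = rzero T₁ r₁
        · -- v <+: r₁ a <+: u = rzero, v ∈ Ret : contradiction  with minimality
          have hvrz' : v <+: rzero T₁ r₁ := hurz ▸ (ha.trans hru)
          have hlen := rzero_min T₁ r₁ hne v hv
          exact hvrz (hvrz'.eq_of_length_le hlen)
        · have huv : u <+: v := psi_prefix_rev T₁ r₁ hne hurz hu hpre
          have h1 : v <+: u := ha.trans hru
          exact hneq (congrArg (psi T₁ r₁) (prefix_antisymm huv h1))
    rw [habove]
    exact hconn v (hRetT v hv) hvne
  · -- width/height bound
    intro y hy
    obtain ⟨v, hv, rfl⟩ := (memT₂ y).mp hy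
    exact ⟨v, hRetT v hv, psi_len v, bag₂_psi v hv⟩


/-- For every tree decomposition of a graph `G` there is a strict tree
decomposition of `G` whose width and height are at most those of the given one. -/
theorem stmt_9 {V : Type*} (G : SimpleGraph V)
    (T : Finset (List ℕ)) (bag : List ℕ → Finset V)
    (h : IsTreeDecomp G T bag) :
    ∃ (T' : Finset (List ℕ)) (bag' : List ℕ → Finset V),
      IsTreeDecomp G T' bag' ∧ IsStrict G T' bag' ∧
      (∀ n : ℕ, (∀ x ∈ T, x.length < n) → ∀ x ∈ T', x.length < n) ∧
      (∀ k : ℕ, (∀ x ∈ T, (bag x).card ≤ k) → ∀ x ∈ T', (bag' x).card ≤ k) := by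
  classical
  by_cases hV : Nonempty V
  · -- main case
    have H : ∀ a : V, ∃ rt, (rt ∈ T ∧ a ∈ bag rt) ∧
        ∀ v ∈ T, a ∈ bag v → rt <+: v ∧ ∀ u, rt <+: u → u <+: v → u ∈ T ∧ a ∈ bag u := by
      intro a
      obtain ⟨rt, h1, h2⟩ := h.vertex_conn a
      refine ⟨rt, h1, ?_⟩
      intro v hv hav
      obtain ⟨hp, hbet⟩ := h2 v ⟨hv, hav⟩
      exact ⟨hp, fun u hu1 hu2 => hbet u hu1 hu2⟩
    choose r hr1 hr2 using H
    have hrT : ∀ a, r a ∈ T := fun a => (hr1 a).1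
    have hrbag : ∀ a, a ∈ bag (r a) := fun a => (hr1 a).2
    have hrmin : ∀ a, ∀ v ∈ T, a ∈ bag v → r a <+: v :=
      fun a v hv hav => (hr2 a v hv hav).1
    have hrbtw : ∀ a, ∀ v ∈ T, a ∈ bag v → ∀ u, r a <+: u → u <+: v → u ∈ T ∧ a ∈ bag u :=
      fun a v hv hav => (hr2 a v hv hav).2
    haveI : Finite V := by
      have hsub : (Set.univ : Set V) ⊆ ⋃ v ∈ (T : Finset (List ℕ)), (bag v : Set V) := by
        intro a _
        exact Set.mem_biUnion (hrT a) (hrbag a)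
      have hfin : (Set.univ : Set V).Finite :=
        Set.Finite.subset (Set.Finite.biUnion T.finite_toSet
          (fun v _ => (bag v).finite_toSet)) hsub
      exact Set.finite_univ_iff.mp hfin
    obtain ⟨e, he⟩ := exists_surjective_nat V
    obtain ⟨T₁, bag₁, r₁, htd₁, hm₁, hmin₁, hbtw₁, hconn₁, hbd₁⟩ :=
      phase1 G T bag h e he r hrT hrbag hrmin hrbtw
    obtain ⟨T₂, bag₂, htd₂, hstrict₂, hbd₂⟩ :=
      phase2 G T₁ bag₁ r₁ htd₁ hm₁ hmin₁ hbtw₁ hconn₁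
    refine ⟨T₂, bag₂, htd₂, hstrict₂, ?_, ?_⟩
    · intro n hn y hy
      obtain ⟨v, hv, hlen, -⟩ := hbd₂ y hy
      obtain ⟨v', hv', hlen', -⟩ := hbd₁ v hv
      have := hn v' hv'
      omega
    · intro k hk y hy
      obtain ⟨v, hv, -, hbeq⟩ := hbd₂ y hy
      obtain ⟨v', hv', -, hsub⟩ := hbd₁ v hv
      rw [hbeq]
      exact le_trans (Finset.card_le_card hsub) (hk v' hv')
  · -- V is empty
    haveI : IsEmpty V := not_nonempty_iff.mp hV
    refine ⟨∅, fun _ => ∅, ?_, ?_, ?_, ?_⟩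
    · constructor
      · intro x hx; simp at hx
      · intro a; exact (IsEmpty.false a).elim
      · intro a b; exact (IsEmpty.false a).elim
    · constructor
      · intro v hv; simp at hv
      · intro v hv; simp at hv
    · intro n _ x hx; simp at hx
    · intro k _ x hx; simp at hx
end

section
/- Let D = (U_v)_{v∈T} be a strict tree decomposition of a graph G of height at most n, let L_i = {a ∈ V : |μ(a)| = i} for i < n, and let G_{≥i} be the subgraph of G induced by L_i ∪ … ∪ L_{n−1}. Define, for a ∈ L_i and b ∈ L_j: a ⪯' b iff i ≤ j and a, b lie in the same connected component of G_{≥i}. Then for all a, b ∉ L_0: a ⪯' b if and only if μ(a) ⪯ μ(b) in T. -/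
open scoped Classical

private lemma walk_prefix {V : Type*} {G : SimpleGraph V} {T : Finset (List ℕ)}
    {bag : List ℕ → Finset V}
    (hTD : IsTreeDecomp G T bag)
    {μ : V → List ℕ}
    (hμ : ∀ a : V, μ a ∈ T ∧ a ∈ bag (μ a) ∧ ∀ u ∈ T, a ∈ bag u → μ a <+: u)
    (m : List ℕ) :
    ∀ {c d : V} (q : G.Walk c d), (∀ x ∈ q.support, m.length ≤ (μ x).length) →
      m <+: μ c → m <+: μ d := by
  intro c d q
  induction q with
  | nil => exact fun _ h => h
  | @cons c e d h q ih =>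
    intro hsup hc
    obtain ⟨u, huT, hcu, heu⟩ := hTD.edge_cover _ _ h
    have h1 : μ c <+: u := (hμ c).2.2 u huT hcu
    have h2 : μ e <+: u := (hμ e).2.2 u huT heu
    have hm : m <+: u := hc.trans h1
    have hlen : m.length ≤ (μ e).length := hsup e (by simp)
    have hme : m <+: μ e := List.prefix_of_prefix_length_le hm h2 hlen
    exact ih (fun x hx => hsup x (by simp [hx])) hme

private lemma lift_walk {V : Type*} {G : SimpleGraph V} {S : Set V} :
    ∀ {x y : S} (q : (G.induce S).Walk x y),
      ∃ p : G.Walk x.1 y.1, ∀ z ∈ p.support, z ∈ S := by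
  intro x y q
  induction q with
  | nil => exact ⟨.nil, by simp⟩
  | @cons x e y h q ih =>
    obtain ⟨p, hp⟩ := ih
    have hadj : G.Adj x.1 e.1 := h
    refine ⟨.cons hadj p, ?_⟩
    intro z hz
    rcases List.mem_cons.mp (by simpa using hz) with h1 | h2
    · exact h1 ▸ x.2
    · exact hp z h2

private lemma mem_aboveSet {V : Type*} {T : Finset (List ℕ)}
    {bag : List ℕ → Finset V} {μ : V → List ℕ}
    (hμ : ∀ a : V, μ a ∈ T ∧ a ∈ bag (μ a) ∧ ∀ u ∈ T, a ∈ bag u → μ a <+: u)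
    (v : List ℕ) (x : V) :
    x ∈ AboveSet T bag v ↔ v <+: μ x := by
  constructor
  · rintro ⟨⟨u, huT, hvu, hxu⟩, hmin⟩
    have h1 : μ x <+: u := (hμ x).2.2 u huT hxu
    rcases List.prefix_or_prefix_of_prefix hvu h1 with h | h
    · exact h
    · by_cases hvx : μ x = v
      · exact hvx ▸ List.prefix_rfl
      · exact absurd ⟨h, hvx⟩ (hmin (μ x) (hμ x).1 (hμ x).2.1)
  · intro h
    refine ⟨⟨μ x, (hμ x).1, h, (hμ x).2.1⟩, fun u huT hxu ⟨huv, hne⟩ => ?_⟩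
    have h1 : μ x <+: u := (hμ x).2.2 u huT hxu
    have h2 : v <+: u := h.trans h1
    exact hne (huv.eq_of_length (le_antisymm huv.length_le h2.length_le))

/-- Let `(U_v)_{v∈T}` be a strict tree decomposition of `G` of height
at most `n`, and let `μ a` be the minimal node whose bag contains `a`.  For vertices
`a, b` not belonging to the root component (`μ a ≠ [] ≠ μ b`):
`a ⪯' b` — i.e. `|μ a| ≤ |μ b|` and `a, b` lie in the same connected component of the
subgraph `G_{≥ |μ a|}` induced on `{x : |μ x| ≥ |μ a|}` (witnessed by a walk all of whose
vertices `x` satisfy `|μ x| ≥ |μ a|`) — holds if and only if `μ a ⪯ μ b` in `T`. -/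
theorem stmt_10 {V : Type*} (G : SimpleGraph V)
    (T : Finset (List ℕ)) (bag : List ℕ → Finset V) (n : ℕ)
    (hTD : IsTreeDecomp G T bag) (hstrict : IsStrict G T bag)
    (hh : ∀ x ∈ T, x.length < n)
    (μ : V → List ℕ)
    (hμ : ∀ a : V, μ a ∈ T ∧ a ∈ bag (μ a) ∧ ∀ u ∈ T, a ∈ bag u → μ a <+: u)
    (a b : V) (ha : μ a ≠ []) (hb : μ b ≠ []) :
    ((μ a).length ≤ (μ b).length ∧
      ∃ p : G.Walk a b, ∀ x ∈ p.support, (μ a).length ≤ (μ x).length)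
    ↔ μ a <+: μ b := by
  constructor
  · rintro ⟨-, p, hp⟩
    exact walk_prefix hTD hμ (μ a) p hp List.prefix_rfl
  · intro h
    refine ⟨h.length_le, ?_⟩
    have hconn := hstrict.2 (μ a) (hμ a).1 ha
    have haS : a ∈ AboveSet T bag (μ a) := (mem_aboveSet hμ _ _).2 List.prefix_rfl
    have hbS : b ∈ AboveSet T bag (μ a) := (mem_aboveSet hμ _ _).2 h
    obtain ⟨q⟩ := hconn.preconnected ⟨a, haS⟩ ⟨b, hbS⟩
    obtain ⟨p, hpmem⟩ := lift_walk q
    exact ⟨p, fun x hx => ((mem_aboveSet hμ _ _).1 (hpmem x hx)).length_le⟩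
end
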